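/- Let A be a bialgebra and M, N Hopf bimodules over A (two-sided two-cosided Hopf modules). With the right A-module structures on A^n⊗M and N⊗A^p given by (a^1⊗...⊗a^n⊗m)·b = a^1⊗...⊗a^n⊗m·b and (x⊗a^1⊗...⊗a^p)·b = Σ x·b_1⊗a^1b_2⊗...⊗a^pb_{p+1}, and the left A-comodule structures a^1⊗...⊗a^n⊗m ↦ Σ (a^1)_1...(a^n)_1 m_{(-1)} ⊗ (a^1)_2⊗...⊗(a^n)_2⊗m_{(0)} and x⊗a^1⊗...⊗a^p ↦ Σ x_{(-1)}⊗x_{(0)}⊗a^1⊗...⊗a^p, the subspaces T^{n,p}(M,N) = Hom_{mod-A}^{A-comod}(A^n⊗M, N⊗A^p) of maps that are simultaneously right A-linear and left A-colinear are stable under the Hopf-module differentials d_m, d_c, so (T^{n,p}(M,N), d_m, d_c) is a double complex defining a cohomology theory for Hopf bimodules. -/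

import Mathlib

open TensorProduct
set_option synthInstance.maxHeartbeats 1000000
set_option maxHeartbeats 1600000
noncomputable section

namespace PS

variable (k : Type) [Field k] (A : Type) [Ring A] [Bialgebra k A]

/-- Left-nested tensor powers with base `B`: `pwr B n = B ⊗ A ⊗ ⋯ ⊗ A` (`n` copies of `A`). -/
def pwr (B : ModuleCat k) : ℕ → ModuleCat k
  | 0 => B
  | n + 1 => ModuleCat.of k (pwr B n ⊗[k] A)

/-- `A^{⊗ n}` realized as `pwr k n`, i.e. `k ⊗ A ⊗ ⋯ ⊗ A`. -/
abbrev Pk (n : ℕ) : ModuleCat k := pwr k A (ModuleCat.of k k) n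

abbrev μA : A ⊗[k] A →ₗ[k] A := LinearMap.mul' k A
abbrev ΔA : A →ₗ[k] A ⊗[k] A := Coalgebra.comul
abbrev εA : A →ₗ[k] k := Coalgebra.counit

/-- Multiplication of the tensorands in slots `i` and `i+1` (`1 ≤ i ≤ n`);
junk (zero map) for other `i`. -/
def mulP : (n : ℕ) → (i : ℕ) → ((Pk k A (n+1) : Type) →ₗ[k] Pk k A n)
  | 0, _ => 0
  | n + 1, i =>
      if i = n + 1 then
        (TensorProduct.map (LinearMap.id : (Pk k A n : Type) →ₗ[k] Pk k A n) (μA k A)).comp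
          (TensorProduct.assoc k (Pk k A n) A A).toLinearMap
      else
        TensorProduct.map (mulP n i) (LinearMap.id : A →ₗ[k] A)

/-- Insert an `A`-factor at the innermost slot (slot 1). -/
def insP : (n : ℕ) → (A ⊗[k] (Pk k A n : Type)) ≃ₗ[k] (Pk k A (n+1) : Type)
  | 0 => TensorProduct.comm k A k
  | n + 1 =>
      (TensorProduct.assoc k A (Pk k A n) A).symm.trans
        (TensorProduct.congr (insP n) (LinearEquiv.refl k A))

section NM

variable {N : Type} [AddCommGroup N] [Module k N]

/-- The left diagonal action of `A` on `N ⊗ A^{⊗ p}` built from a base action `ωN`. -/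
def ldiag (ωN : A ⊗[k] N →ₗ[k] N) :
    (p : ℕ) → (A ⊗[k] (pwr k A (ModuleCat.of k N) p : Type) →ₗ[k] pwr k A (ModuleCat.of k N) p)
  | 0 => ωN
  | p + 1 =>
      (TensorProduct.map (ldiag ωN p) (μA k A)).comp <|
        ((TensorProduct.tensorTensorTensorComm k A A
            (pwr k A (ModuleCat.of k N) p : Type) A).toLinearMap).comp
          (TensorProduct.map (ΔA k A) (LinearMap.id :
            ((pwr k A (ModuleCat.of k N) p : Type) ⊗[k] A) →ₗ[k] _))

/-- Right diagonal multiplication on the `A`-slots of `N ⊗ A^{⊗ p}` (counit on the base). -/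
def rdiagE : (p : ℕ) →
    ((pwr k A (ModuleCat.of k N) p : Type) ⊗[k] A →ₗ[k] pwr k A (ModuleCat.of k N) p)
  | 0 => (TensorProduct.rid k N).toLinearMap.comp
      (TensorProduct.map (LinearMap.id : N →ₗ[k] N) (εA k A))
  | p + 1 =>
      (TensorProduct.map (rdiagE p) (μA k A)).comp <|
        ((TensorProduct.tensorTensorTensorComm k
            (pwr k A (ModuleCat.of k N) p : Type) A A A).toLinearMap).comp
          (TensorProduct.map
            (LinearMap.id : ((pwr k A (ModuleCat.of k N) p : Type) ⊗[k] A) →ₗ[k] _) (ΔA k A))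

/-- Right diagonal action on `N ⊗ A^{⊗ p}` built from a base (right) action `ωNr`. -/
def rdiagAct (ωNr : N ⊗[k] A →ₗ[k] N) : (p : ℕ) →
    ((pwr k A (ModuleCat.of k N) p : Type) ⊗[k] A →ₗ[k] pwr k A (ModuleCat.of k N) p)
  | 0 => ωNr
  | p + 1 =>
      (TensorProduct.map (rdiagAct ωNr p) (μA k A)).comp <|
        ((TensorProduct.tensorTensorTensorComm k
            (pwr k A (ModuleCat.of k N) p : Type) A A A).toLinearMap).comp
          (TensorProduct.map
            (LinearMap.id : ((pwr k A (ModuleCat.of k N) p : Type) ⊗[k] A) →ₗ[k] _) (ΔA k A))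

end NM

/-- `dL : A^{⊗ n} → A ⊗ A^{⊗ n}`, `a^1 ⊗ ⋯ ⊗ a^n ↦ Σ (a^1)_1 ⋯ (a^n)_1 ⊗ ((a^1)_2 ⊗ ⋯ ⊗ (a^n)_2)`. -/
def dL : (n : ℕ) → ((Pk k A n : Type) →ₗ[k] A ⊗[k] (Pk k A n : Type))
  | 0 => (TensorProduct.map (Algebra.linearMap k A) (LinearMap.id : k →ₗ[k] k)).comp
      (TensorProduct.lid k k).symm.toLinearMap
  | n + 1 =>
      (TensorProduct.map (μA k A)
          (LinearMap.id : ((Pk k A n : Type) ⊗[k] A) →ₗ[k] _)).comp <|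
        ((TensorProduct.tensorTensorTensorComm k A (Pk k A n : Type) A A).toLinearMap).comp
          (TensorProduct.map (dL n) (ΔA k A))

/-- `dR : A^{⊗ n} → A^{⊗ n} ⊗ A`, `a^1 ⊗ ⋯ ⊗ a^n ↦ Σ ((a^1)_1 ⊗ ⋯ ⊗ (a^n)_1) ⊗ (a^1)_2 ⋯ (a^n)_2`. -/
def dR : (n : ℕ) → ((Pk k A n : Type) →ₗ[k] (Pk k A n : Type) ⊗[k] A)
  | 0 => (TensorProduct.map (LinearMap.id : k →ₗ[k] k) (Algebra.linearMap k A)).comp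
      (TensorProduct.rid k k).symm.toLinearMap
  | n + 1 =>
      (TensorProduct.map
          (LinearMap.id : ((Pk k A n : Type) ⊗[k] A) →ₗ[k] _) (μA k A)).comp <|
        ((TensorProduct.tensorTensorTensorComm k (Pk k A n : Type) A A A).toLinearMap).comp
          (TensorProduct.map (dR n) (ΔA k A))

section Base

variable {N : Type} [AddCommGroup N] [Module k N]

/-- Apply `ρN : N → N ⊗ A` to the base of `N ⊗ A^{⊗ p}`. -/
def rhoBase (ρN : N →ₗ[k] N ⊗[k] A) : (p : ℕ) →
    ((pwr k A (ModuleCat.of k N) p : Type) →ₗ[k] pwr k A (ModuleCat.of k (N ⊗[k] A)) p)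
  | 0 => ρN
  | p + 1 => TensorProduct.map (rhoBase ρN p) (LinearMap.id : A →ₗ[k] A)

/-- Reinterpret `(N ⊗ A) ⊗ A^{⊗ p}` as `N ⊗ A^{⊗ (p+1)}`. -/
def shiftB : (p : ℕ) →
    ((pwr k A (ModuleCat.of k (N ⊗[k] A)) p : Type) ≃ₗ[k] pwr k A (ModuleCat.of k N) (p+1))
  | 0 => LinearEquiv.refl k (N ⊗[k] A)
  | p + 1 => TensorProduct.congr (shiftB p) (LinearEquiv.refl k A)

/-- Multiply the `A`-component of the base `N ⊗ A` on the right by an element of `A`. -/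
def rmulBase : (p : ℕ) →
    ((pwr k A (ModuleCat.of k (N ⊗[k] A)) p : Type) ⊗[k] A →ₗ[k]
      pwr k A (ModuleCat.of k (N ⊗[k] A)) p)
  | 0 => (TensorProduct.map (LinearMap.id : N →ₗ[k] N) (μA k A)).comp
      (TensorProduct.assoc k N A A).toLinearMap
  | p + 1 =>
      (TensorProduct.map (rmulBase p) (LinearMap.id : A →ₗ[k] A)).comp <|
        ((TensorProduct.assoc k (pwr k A (ModuleCat.of k (N ⊗[k] A)) p : Type) A A).symm.toLinearMap).comp <|
          (TensorProduct.map
            (LinearMap.id : (pwr k A (ModuleCat.of k (N ⊗[k] A)) p : Type) →ₗ[k] _)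
            (TensorProduct.comm k A A).toLinearMap).comp
            (TensorProduct.assoc k
              (pwr k A (ModuleCat.of k (N ⊗[k] A)) p : Type) A A).toLinearMap

/-- Apply the counit to the `A`-component of the base `N ⊗ A`. -/
def epsBase : (p : ℕ) →
    ((pwr k A (ModuleCat.of k (N ⊗[k] A)) p : Type) →ₗ[k] pwr k A (ModuleCat.of k N) p)
  | 0 => (TensorProduct.rid k N).toLinearMap.comp
      (TensorProduct.map (LinearMap.id : N →ₗ[k] N) (εA k A))
  | p + 1 => TensorProduct.map (epsBase p) (LinearMap.id : A →ₗ[k] A)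

/-- Apply `Δ` on the `i`-th `A`-slot (`1 ≤ i ≤ p`) of `N ⊗ A^{⊗ p}`; junk otherwise. -/
def comulAt : (p : ℕ) → (i : ℕ) →
    ((pwr k A (ModuleCat.of k N) p : Type) →ₗ[k] pwr k A (ModuleCat.of k N) (p+1))
  | 0, _ => 0
  | p + 1, i =>
      if i = p + 1 then
        ((TensorProduct.assoc k (pwr k A (ModuleCat.of k N) p : Type) A A).symm.toLinearMap).comp
          (TensorProduct.map
            (LinearMap.id : (pwr k A (ModuleCat.of k N) p : Type) →ₗ[k] _) (ΔA k A))
      else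
        TensorProduct.map (comulAt p i) (LinearMap.id : A →ₗ[k] A)

/-- Left coaction on `N ⊗ A^{⊗ p}` coming from a left coaction on the base. -/
def lcoBase (ρNl : N →ₗ[k] A ⊗[k] N) : (p : ℕ) →
    ((pwr k A (ModuleCat.of k N) p : Type) →ₗ[k]
      A ⊗[k] (pwr k A (ModuleCat.of k N) p : Type))
  | 0 => ρNl
  | p + 1 =>
      ((TensorProduct.assoc k A (pwr k A (ModuleCat.of k N) p : Type) A).toLinearMap).comp
        (TensorProduct.map (lcoBase ρNl p) (LinearMap.id : A →ₗ[k] A))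

end Base

section Bicomplex

variable {M N : Type} [AddCommGroup M] [Module k M] [AddCommGroup N] [Module k N]

/-- `A^{⊗ n} ⊗ M`, the domain of the `(n,p)` cochains. -/
abbrev Dm (M : Type) [AddCommGroup M] [Module k M] (n : ℕ) : Type :=
  (Pk k A n : Type) ⊗[k] M

/-- `N ⊗ A^{⊗ p}`. -/
abbrev Cd (N : Type) [AddCommGroup N] [Module k N] (p : ℕ) : Type :=
  (pwr k A (ModuleCat.of k N) p : Type)

/-- The space of `(n,p)` cochains `Hom(A^{⊗ n} ⊗ M, N ⊗ A^{⊗ p})`. -/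
abbrev Yc (M N : Type) [AddCommGroup M] [Module k M] [AddCommGroup N] [Module k N]
    (n p : ℕ) : Type := Dm k A M n →ₗ[k] Cd k A N p

variable (ωM : A ⊗[k] M →ₗ[k] M) (ρM : M →ₗ[k] M ⊗[k] A)
variable (ωN : A ⊗[k] N →ₗ[k] N) (ρN : N →ₗ[k] N ⊗[k] A)

/-- `b_0`: the face using the diagonal left action of `a^1` on `N ⊗ A^{⊗ p}`. -/
def face0 (n p : ℕ) (f : Yc k A M N n p) : Yc k A M N (n+1) p :=
  (ldiag k A ωN p).comp <|
    (TensorProduct.map (LinearMap.id : A →ₗ[k] A) f).comp <|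
      ((TensorProduct.assoc k A (Pk k A n : Type) M).toLinearMap).comp
        (TensorProduct.map (insP k A n).symm.toLinearMap (LinearMap.id : M →ₗ[k] M))

/-- `b_i`, `1 ≤ i ≤ n`: multiply the adjacent arguments `a^i a^{i+1}`. -/
def faceMid (n p : ℕ) (i : ℕ) (f : Yc k A M N n p) : Yc k A M N (n+1) p :=
  f.comp (TensorProduct.map (mulP k A n i) (LinearMap.id : M →ₗ[k] M))

/-- `b_{n+1}` in the Hopf-module case: `f(a^1 ⊗ ⋯ ⊗ a^n ⊗ a^{n+1}·m)`. -/
def faceLastH (n p : ℕ) (f : Yc k A M N n p) : Yc k A M N (n+1) p :=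
  f.comp <|
    (TensorProduct.map (LinearMap.id : (Pk k A n : Type) →ₗ[k] _) ωM).comp
      (TensorProduct.assoc k (Pk k A n : Type) A M).toLinearMap

/-- `b_{n+1}` in the Yetter-Drinfel'd case. -/
def faceLastYD (n p : ℕ) (f : Yc k A M N n p) : Yc k A M N (n+1) p :=
  (rdiagE k A p).comp <|
    ((TensorProduct.comm k A (Cd k A N p)).toLinearMap).comp <|
      (TensorProduct.map (LinearMap.id : A →ₗ[k] A)
        (f.comp (TensorProduct.map (LinearMap.id : (Pk k A n : Type) →ₗ[k] _) ωM))).comp <|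
        ((TensorProduct.leftComm k (Pk k A n : Type) A (A ⊗[k] M)).toLinearMap).comp <|
          (TensorProduct.map (LinearMap.id : (Pk k A n : Type) →ₗ[k] _)
            (TensorProduct.assoc k A A M).toLinearMap).comp <|
            ((TensorProduct.assoc k (Pk k A n : Type) (A ⊗[k] A) M).toLinearMap).comp
              (TensorProduct.map
                (TensorProduct.map (LinearMap.id : (Pk k A n : Type) →ₗ[k] _) (ΔA k A))
                (LinearMap.id : M →ₗ[k] M))

/-- The Yetter-Drinfel'd horizontal faces `b_i^{n,p}`, `0 ≤ i ≤ n+1`. -/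
def bYD (n p : ℕ) (i : ℕ) (f : Yc k A M N n p) : Yc k A M N (n+1) p :=
  if i = 0 then face0 k A ωN n p f
  else if i ≤ n then faceMid k A n p i f
  else faceLastYD k A ωM n p f

/-- The Hopf-module horizontal faces `b_i^{n,p}`, `0 ≤ i ≤ n+1`. -/
def bH (n p : ℕ) (i : ℕ) (f : Yc k A M N n p) : Yc k A M N (n+1) p :=
  if i = 0 then face0 k A ωN n p f
  else if i ≤ n then faceMid k A n p i f
  else faceLastH k A ωM n p f

/-- `c_0` in the Hopf-module case: apply `ρ_N` to the `N`-component of the output. -/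
def cof0H (n p : ℕ) (f : Yc k A M N n p) : Yc k A M N n (p+1) :=
  ((shiftB k A p).toLinearMap).comp ((rhoBase k A ρN p).comp f)

/-- `c_0` in the Yetter-Drinfel'd case. -/
def cof0YD (n p : ℕ) (f : Yc k A M N n p) : Yc k A M N n (p+1) :=
  ((shiftB k A p).toLinearMap).comp <|
    (rmulBase k A p).comp <|
      ((TensorProduct.comm k A
          (pwr k A (ModuleCat.of k (N ⊗[k] A)) p : Type)).toLinearMap).comp <|
        (TensorProduct.map (LinearMap.id : A →ₗ[k] A) ((rhoBase k A ρN p).comp f)).comp <|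
          ((TensorProduct.assoc k A (Pk k A n : Type) M).toLinearMap).comp
            (TensorProduct.map (dL k A n) (LinearMap.id : M →ₗ[k] M))

/-- `c_{p+1}`: uses the right comodule structure of `M`. -/
def cofLast (n p : ℕ) (f : Yc k A M N n p) : Yc k A M N n (p+1) :=
  (TensorProduct.map f (μA k A)).comp <|
    ((TensorProduct.tensorTensorTensorComm k (Pk k A n : Type) A M A).toLinearMap).comp
      (TensorProduct.map (dR k A n) ρM)

/-- The Yetter-Drinfel'd vertical cofaces `c_j^{n,p}`, `0 ≤ j ≤ p+1`. -/
def cYD (n p : ℕ) (j : ℕ) (f : Yc k A M N n p) : Yc k A M N n (p+1) :=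
  if j = 0 then cof0YD k A ρN n p f
  else if j ≤ p then (comulAt k A p j).comp f
  else cofLast k A ρM n p f

/-- The Hopf-module vertical cofaces `c_j^{n,p}`, `0 ≤ j ≤ p+1`. -/
def cH (n p : ℕ) (j : ℕ) (f : Yc k A M N n p) : Yc k A M N n (p+1) :=
  if j = 0 then cof0H k A ρN n p f
  else if j ≤ p then (comulAt k A p j).comp f
  else cofLast k A ρM n p f

/-- The horizontal differential (Yetter-Drinfel'd case). -/
def dmYD (n p : ℕ) (f : Yc k A M N n p) : Yc k A M N (n+1) p :=
  ∑ i ∈ Finset.range (n+2), ((-1 : ℤ)^i) • bYD k A ωM ωN n p i f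

/-- The vertical differential (Yetter-Drinfel'd case). -/
def dcYD (n p : ℕ) (f : Yc k A M N n p) : Yc k A M N n (p+1) :=
  ∑ j ∈ Finset.range (p+2), ((-1 : ℤ)^j) • cYD k A ρM ρN n p j f

/-- The horizontal differential (Hopf-module case). -/
def dmH (n p : ℕ) (f : Yc k A M N n p) : Yc k A M N (n+1) p :=
  ∑ i ∈ Finset.range (n+2), ((-1 : ℤ)^i) • bH k A ωM ωN n p i f

/-- The vertical differential (Hopf-module case). -/
def dcH (n p : ℕ) (f : Yc k A M N n p) : Yc k A M N n (p+1) :=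
  ∑ j ∈ Finset.range (p+2), ((-1 : ℤ)^j) • cH k A ρM ρN n p j f

end Bicomplex

section Structures

variable {M : Type} [AddCommGroup M] [Module k M]

/-- `(M, ωM)` is a left `A`-module. -/
def IsModule (ωM : A ⊗[k] M →ₗ[k] M) : Prop :=
  (∀ m : M, ωM ((1 : A) ⊗ₜ m) = m) ∧
  ∀ (a b : A) (m : M), ωM (a ⊗ₜ ωM (b ⊗ₜ m)) = ωM ((a * b) ⊗ₜ m)

/-- `(M, ρM)` is a right `A`-comodule. -/
def IsComodule (ρM : M →ₗ[k] M ⊗[k] A) : Prop :=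
  ((TensorProduct.rid k M).toLinearMap.comp
      ((TensorProduct.map (LinearMap.id : M →ₗ[k] M) (εA k A)).comp ρM) = LinearMap.id) ∧
  (TensorProduct.map ρM (LinearMap.id : A →ₗ[k] A)).comp ρM =
    ((TensorProduct.assoc k M A A).symm.toLinearMap).comp
      ((TensorProduct.map (LinearMap.id : M →ₗ[k] M) (ΔA k A)).comp ρM)

/-- The map `a ⊗ m ↦ Σ a_1·m_0 ⊗ a_2 m_1`. -/
def hopfRHS (ωM : A ⊗[k] M →ₗ[k] M) (ρM : M →ₗ[k] M ⊗[k] A) :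
    A ⊗[k] M →ₗ[k] M ⊗[k] A :=
  (TensorProduct.map ωM (μA k A)).comp <|
    ((TensorProduct.tensorTensorTensorComm k A A M A).toLinearMap).comp
      (TensorProduct.map (ΔA k A) ρM)

/-- The map `a ⊗ m ↦ Σ (a_2·m)_0 ⊗ (a_2·m)_1 a_1`. -/
def ydLHS (ωM : A ⊗[k] M →ₗ[k] M) (ρM : M →ₗ[k] M ⊗[k] A) :
    A ⊗[k] M →ₗ[k] M ⊗[k] A :=
  (TensorProduct.map (LinearMap.id : M →ₗ[k] M) (μA k A)).comp <|
    ((TensorProduct.assoc k M A A).toLinearMap).comp <|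
      ((TensorProduct.comm k A (M ⊗[k] A)).toLinearMap).comp <|
        (TensorProduct.map (LinearMap.id : A →ₗ[k] A) (ρM.comp ωM)).comp <|
          ((TensorProduct.assoc k A A M).toLinearMap).comp
            (TensorProduct.map (ΔA k A) (LinearMap.id : M →ₗ[k] M))

/-- `(M, ωM, ρM)` is a left-right Yetter-Drinfel'd module over `A`. -/
def IsYetterDrinfeld (ωM : A ⊗[k] M →ₗ[k] M) (ρM : M →ₗ[k] M ⊗[k] A) : Prop :=
  IsModule k A ωM ∧ IsComodule k A ρM ∧
    ydLHS k A ωM ρM = hopfRHS k A ωM ρM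

/-- `(M, ωM, ρM)` is a left-right Hopf module over `A`. -/
def IsHopfModule (ωM : A ⊗[k] M →ₗ[k] M) (ρM : M →ₗ[k] M ⊗[k] A) : Prop :=
  IsModule k A ωM ∧ IsComodule k A ρM ∧
    ρM.comp ωM = hopfRHS k A ωM ρM

end Structures


section Bimod

variable (k : Type) [Field k] (A : Type) [Ring A] [Bialgebra k A]
variable {M N : Type} [AddCommGroup M] [Module k M] [AddCommGroup N] [Module k N]

/-- The right `A`-action on `A^{⊗n} ⊗ M`: `(a^1 ⊗ ⋯ ⊗ a^n ⊗ m)·b = a^1 ⊗ ⋯ ⊗ a^n ⊗ m·b`. -/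
def rActDm (ωMr : M ⊗[k] A →ₗ[k] M) (n : ℕ) :
    (Dm k A M n) ⊗[k] A →ₗ[k] Dm k A M n :=
  (TensorProduct.map (LinearMap.id : (Pk k A n : Type) →ₗ[k] _) ωMr).comp
    (TensorProduct.assoc k (Pk k A n : Type) M A).toLinearMap

/-- `f : A^{⊗n} ⊗ M → N ⊗ A^{⊗p}` is right `A`-linear for the structures of the paper
(the diagonal right action `(x ⊗ a^1 ⊗ ⋯ ⊗ a^p)·b = Σ x·b_1 ⊗ a^1 b_2 ⊗ ⋯ ⊗ a^p b_{p+1}`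
on the codomain). -/
def IsRightLinear (ωMr : M ⊗[k] A →ₗ[k] M) (ωNr : N ⊗[k] A →ₗ[k] N) (n p : ℕ)
    (f : Yc k A M N n p) : Prop :=
  f.comp (rActDm k A ωMr n) =
    (rdiagAct k A ωNr p).comp (TensorProduct.map f (LinearMap.id : A →ₗ[k] A))

/-- `(M, ωMr)` is a right `A`-module. -/
def IsModuleR (ωMr : M ⊗[k] A →ₗ[k] M) : Prop :=
  (∀ m : M, ωMr (m ⊗ₜ (1 : A)) = m) ∧
  ∀ (m : M) (a b : A), ωMr (ωMr (m ⊗ₜ a) ⊗ₜ b) = ωMr (m ⊗ₜ (a * b))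

/-- Bimodule compatibility: `(a·m)·b = a·(m·b)`. -/
def IsBimodule (ωM : A ⊗[k] M →ₗ[k] M) (ωMr : M ⊗[k] A →ₗ[k] M) : Prop :=
  ∀ (a b : A) (m : M), ωMr (ωM (a ⊗ₜ m) ⊗ₜ b) = ωM (a ⊗ₜ ωMr (m ⊗ₜ b))

/-- Right-right Hopf-module compatibility: `ρ(m·a) = Σ m_0·a_1 ⊗ m_1 a_2`. -/
def IsHopfRR (ωMr : M ⊗[k] A →ₗ[k] M) (ρM : M →ₗ[k] M ⊗[k] A) : Prop :=
  ρM.comp ωMr =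
    (TensorProduct.map ωMr (μA k A)).comp
      (((TensorProduct.tensorTensorTensorComm k M A A A).toLinearMap).comp
        (TensorProduct.map ρM (ΔA k A)))

/-- `M` is an object of `A_{lr}^r`: a bimodule which is a left-right and a
right-right Hopf module. -/
def IsLRRObject (ωM : A ⊗[k] M →ₗ[k] M) (ωMr : M ⊗[k] A →ₗ[k] M)
    (ρM : M →ₗ[k] M ⊗[k] A) : Prop :=
  IsModule k A ωM ∧ IsModuleR k A ωMr ∧ IsBimodule k A ωM ωMr ∧
    IsComodule k A ρM ∧ ρM.comp ωM = hopfRHS k A ωM ρM ∧ IsHopfRR k A ωMr ρM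

/-- The left `A`-coaction on `A^{⊗n} ⊗ M`:
`a^1 ⊗ ⋯ ⊗ a^n ⊗ m ↦ Σ (a^1)_1 ⋯ (a^n)_1 m_{(-1)} ⊗ (a^1)_2 ⊗ ⋯ ⊗ (a^n)_2 ⊗ m_{(0)}`. -/
def lcoDm (ρMl : M →ₗ[k] A ⊗[k] M) (n : ℕ) :
    Dm k A M n →ₗ[k] A ⊗[k] Dm k A M n :=
  (TensorProduct.map (μA k A)
      (LinearMap.id : ((Pk k A n : Type) ⊗[k] M) →ₗ[k] _)).comp <|
    ((TensorProduct.tensorTensorTensorComm k A (Pk k A n : Type) A M).toLinearMap).comp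
      (TensorProduct.map (dL k A n) ρMl)

/-- `f : A^{⊗n} ⊗ M → N ⊗ A^{⊗p}` is left `A`-colinear for the structures of the paper
(the coaction `x ⊗ a^1 ⊗ ⋯ ⊗ a^p ↦ Σ x_{(-1)} ⊗ x_{(0)} ⊗ a^1 ⊗ ⋯ ⊗ a^p` on the
codomain). -/
def IsLeftColinear (ρMl : M →ₗ[k] A ⊗[k] M) (ρNl : N →ₗ[k] A ⊗[k] N) (n p : ℕ)
    (f : Yc k A M N n p) : Prop :=
  (lcoBase k A ρNl p).comp f =
    (TensorProduct.map (LinearMap.id : A →ₗ[k] A) f).comp (lcoDm k A ρMl n)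

/-- `(M, ρMl)` is a left `A`-comodule. -/
def IsComoduleL (ρMl : M →ₗ[k] A ⊗[k] M) : Prop :=
  ((TensorProduct.lid k M).toLinearMap.comp
      ((TensorProduct.map (εA k A) (LinearMap.id : M →ₗ[k] M)).comp ρMl) =
    LinearMap.id) ∧
  (TensorProduct.map (ΔA k A) (LinearMap.id : M →ₗ[k] M)).comp ρMl =
    ((TensorProduct.assoc k A A M).symm.toLinearMap).comp
      ((TensorProduct.map (LinearMap.id : A →ₗ[k] A) ρMl).comp ρMl)

/-- `M` is an `A`-bicomodule:
`Σ m_{(-1)} ⊗ (m_{(0)})_0 ⊗ (m_{(0)})_1 = Σ (m_0)_{(-1)} ⊗ (m_0)_{(0)} ⊗ m_1`. -/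
def IsBicomodule (ρMl : M →ₗ[k] A ⊗[k] M) (ρM : M →ₗ[k] M ⊗[k] A) : Prop :=
  (TensorProduct.map (LinearMap.id : A →ₗ[k] A) ρM).comp ρMl =
    ((TensorProduct.assoc k A M A).toLinearMap).comp
      ((TensorProduct.map ρMl (LinearMap.id : A →ₗ[k] A)).comp ρM)

/-- Left-left Hopf-module compatibility: `ρ^l(a·m) = Σ a_1 m_{(-1)} ⊗ a_2·m_{(0)}`. -/
def IsHopfLL (ωM : A ⊗[k] M →ₗ[k] M) (ρMl : M →ₗ[k] A ⊗[k] M) : Prop :=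
  ρMl.comp ωM =
    (TensorProduct.map (μA k A) ωM).comp
      (((TensorProduct.tensorTensorTensorComm k A A A M).toLinearMap).comp
        (TensorProduct.map (ΔA k A) ρMl))

/-- Right-left Hopf-module compatibility: `ρ^l(m·a) = Σ m_{(-1)} a_1 ⊗ m_{(0)}·a_2`. -/
def IsHopfRL (ωMr : M ⊗[k] A →ₗ[k] M) (ρMl : M →ₗ[k] A ⊗[k] M) : Prop :=
  ρMl.comp ωMr =
    (TensorProduct.map (μA k A) ωMr).comp
      (((TensorProduct.tensorTensorTensorComm k A M A A).toLinearMap).comp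
        (TensorProduct.map ρMl (ΔA k A)))

/-- `M` is an object of `A_l^{lr}`: a bicomodule which is a left-left and a
left-right Hopf module. -/
def IsLLRObject (ωM : A ⊗[k] M →ₗ[k] M) (ρMl : M →ₗ[k] A ⊗[k] M)
    (ρM : M →ₗ[k] M ⊗[k] A) : Prop :=
  IsModule k A ωM ∧ IsComoduleL k A ρMl ∧ IsComodule k A ρM ∧
    IsBicomodule k A ρMl ρM ∧ IsHopfLL k A ωM ρMl ∧
    ρM.comp ωM = hopfRHS k A ωM ρM

/-- `M` is a Hopf bimodule (two-sided two-cosided Hopf module) over `A`. -/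
def IsHopfBimodule (ωM : A ⊗[k] M →ₗ[k] M) (ωMr : M ⊗[k] A →ₗ[k] M)
    (ρMl : M →ₗ[k] A ⊗[k] M) (ρM : M →ₗ[k] M ⊗[k] A) : Prop :=
  IsModule k A ωM ∧ IsModuleR k A ωMr ∧ IsBimodule k A ωM ωMr ∧
    IsComoduleL k A ρMl ∧ IsComodule k A ρM ∧ IsBicomodule k A ρMl ρM ∧
    IsHopfLL k A ωM ρMl ∧ ρM.comp ωM = hopfRHS k A ωM ρM ∧
    IsHopfRL k A ωMr ρMl ∧ IsHopfRR k A ωMr ρM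

end Bimod


attribute [reducible] pwr

section Proofs
open Coalgebra TensorProduct

variable {k : Type} [Field k] {A : Type} [Ring A] [Bialgebra k A]

/-- Product of two comultiplication representations. -/
def mulRepr {ιa ιb : Type*} {a b : A} (ra : Coalgebra.Repr k a ιa) (rb : Coalgebra.Repr k b ιb) :
    Coalgebra.Repr k (a * b) (ιa × ιb) where
  index := ra.index ×ˢ rb.index
  left := fun ij => ra.left ij.1 * rb.left ij.2
  right := fun ij => ra.right ij.1 * rb.right ij.2
  eq := by
    rw [Finset.sum_product, Bialgebra.comul_mul a b, ← ra.eq, ← rb.eq, Finset.sum_mul_sum]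
    simp only [Algebra.TensorProduct.tmul_mul_tmul]

/-- Turn a curried trilinear map into a linear map on `A ⊗ (A ⊗ A)`. -/
def tri3 {T : Type} [AddCommGroup T] [Module k T]
    (G : A →ₗ[k] A →ₗ[k] A →ₗ[k] T) : A ⊗[k] (A ⊗[k] A) →ₗ[k] T :=
  TensorProduct.lift ((TensorProduct.lift.equiv (RingHom.id k) A A T).toLinearMap ∘ₗ G)

@[simp] lemma tri3_tmul {T : Type} [AddCommGroup T] [Module k T]
    (G : A →ₗ[k] A →ₗ[k] A →ₗ[k] T) (x y z : A) :
    tri3 G (x ⊗ₜ (y ⊗ₜ z)) = G x y z := rfl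

/-- Coassociativity in summed (Sweedler) form, applied through a linear map. -/
lemma coassoc_sum {T : Type} [AddCommGroup T] [Module k T]
    (Φ : A ⊗[k] (A ⊗[k] A) →ₗ[k] T) {a : A} {ιr : Type*} (r : Coalgebra.Repr k a ιr)
    {κ₁ κ₂ : ιr → Type*}
    (r₁ : ∀ i, Coalgebra.Repr k (r.left i) (κ₁ i)) (r₂ : ∀ i, Coalgebra.Repr k (r.right i) (κ₂ i)) :
    ∑ i ∈ r.index, ∑ j ∈ (r₁ i).index,
        Φ ((r₁ i).left j ⊗ₜ ((r₁ i).right j ⊗ₜ r.right i))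
      = ∑ i ∈ r.index, ∑ j ∈ (r₂ i).index,
        Φ (r.left i ⊗ₜ ((r₂ i).left j ⊗ₜ (r₂ i).right j)) := by
  have h := Coalgebra.sum_tmul_tmul_eq r r₁ r₂
  have h2 := congrArg Φ h
  simpa only [map_sum] using h2


section Eval
variable {k : Type} [Field k] {A : Type} [Ring A] [Bialgebra k A]
variable {M N : Type} [AddCommGroup M] [Module k M] [AddCommGroup N] [Module k N]

lemma ldiag_zero_ap (ω : A ⊗[k] N →ₗ[k] N) (t : A ⊗[k] N) :
    ldiag k A ω 0 t = ω t := rfl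

lemma ldiag_succ_ap (ω : A ⊗[k] N →ₗ[k] N) (p : ℕ) (a : A) (u : Cd k A N p) (c : A)
    {ιr : Type*} (r : Coalgebra.Repr k a ιr) :
    ldiag k A ω (p+1) (a ⊗ₜ (u ⊗ₜ c)) =
      ∑ i ∈ r.index, ldiag k A ω p (r.left i ⊗ₜ u) ⊗ₜ (r.right i * c) := by
  show (TensorProduct.map (ldiag k A ω p) (μA k A))
      ((TensorProduct.tensorTensorTensorComm k A A (Cd k A N p) A)
        ((TensorProduct.map (ΔA k A) LinearMap.id) (a ⊗ₜ (u ⊗ₜ c)))) = _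
  rw [TensorProduct.map_tmul, LinearMap.id_coe, id_eq, show (ΔA k A) a = Coalgebra.comul a from rfl, ← r.eq]
  simp [sum_tmul, map_sum, LinearMap.mul'_apply, tensorTensorTensorComm_tmul]

lemma rdiag_zero_ap (ω : N ⊗[k] A →ₗ[k] N) (t : N ⊗[k] A) :
    rdiagAct k A ω 0 t = ω t := rfl

lemma rdiag_succ_ap (ω : N ⊗[k] A →ₗ[k] N) (p : ℕ) (u : Cd k A N p) (c b : A)
    {ιr : Type*} (r : Coalgebra.Repr k b ιr) :
    rdiagAct k A ω (p+1) ((u ⊗ₜ c) ⊗ₜ b) =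
      ∑ i ∈ r.index, rdiagAct k A ω p (u ⊗ₜ r.left i) ⊗ₜ (c * r.right i) := by
  show (TensorProduct.map (rdiagAct k A ω p) (μA k A))
      ((TensorProduct.tensorTensorTensorComm k (Cd k A N p) A A A)
        ((TensorProduct.map LinearMap.id (ΔA k A)) ((u ⊗ₜ c) ⊗ₜ b))) = _
  rw [TensorProduct.map_tmul, LinearMap.id_coe, id_eq, show (ΔA k A) b = Coalgebra.comul b from rfl, ← r.eq]
  simp [tmul_sum, map_sum, LinearMap.mul'_apply, tensorTensorTensorComm_tmul]

lemma mulP_top_ap (n : ℕ) (x : (Pk k A n : Type)) (a b : A) :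
    mulP k A (n+1) (n+1) ((x ⊗ₜ a) ⊗ₜ b) = x ⊗ₜ (a * b) := by
  simp only [mulP, reduceIte]; rfl

lemma mulP_ne_ap (n i : ℕ) (h : i ≠ n+1) (w : (Pk k A (n+1) : Type)) (b : A) :
    mulP k A (n+1) i (w ⊗ₜ b) = mulP k A n i w ⊗ₜ b := by
  simp only [mulP]; rw [if_neg h]; rfl

lemma insP_zero_ap (a : A) (t : k) : insP k A 0 (a ⊗ₜ t) = t ⊗ₜ a := rfl

lemma insP_succ_ap (n : ℕ) (a : A) (y : (Pk k A n : Type)) (c : A) :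
    insP k A (n+1) (a ⊗ₜ (y ⊗ₜ c)) = insP k A n (a ⊗ₜ y) ⊗ₜ c := rfl

lemma dL_zero_ap (t : k) : dL k A 0 t = (1 : A) ⊗ₜ t := by
  show (TensorProduct.map (Algebra.linearMap k A) LinearMap.id)
      ((TensorProduct.lid k k).symm t) = _
  simp

lemma dL_succ_ap {n : ℕ} (y : (Pk k A n : Type)) (c : A) {ι : Type*} {S : Finset ι}
    {v : ι → A} {w : ι → (Pk k A n : Type)} (hy : dL k A n y = ∑ s ∈ S, v s ⊗ₜ w s)
    {ιr : Type*} (r : Coalgebra.Repr k c ιr) :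
    dL k A (n+1) (y ⊗ₜ c) =
      ∑ s ∈ S, ∑ i ∈ r.index, (v s * r.left i) ⊗ₜ (w s ⊗ₜ r.right i) := by
  show (TensorProduct.map (μA k A) LinearMap.id)
      ((TensorProduct.tensorTensorTensorComm k A (Pk k A n : Type) A A)
        ((TensorProduct.map (dL k A n) (ΔA k A)) (y ⊗ₜ c))) = _
  rw [TensorProduct.map_tmul, hy, show (ΔA k A) c = Coalgebra.comul c from rfl, ← r.eq]
  simp [sum_tmul, tmul_sum, map_sum, LinearMap.mul'_apply, tensorTensorTensorComm_tmul]
  rw [Finset.sum_comm]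

lemma dR_zero_ap (t : k) : dR k A 0 t = t ⊗ₜ (1 : A) := by
  show (TensorProduct.map LinearMap.id (Algebra.linearMap k A))
      ((TensorProduct.rid k k).symm t) = _
  simp

lemma dR_succ_ap {n : ℕ} (y : (Pk k A n : Type)) (c : A) {ι : Type*} {S : Finset ι}
    {v : ι → (Pk k A n : Type)} {w : ι → A} (hy : dR k A n y = ∑ s ∈ S, v s ⊗ₜ w s)
    {ιr : Type*} (r : Coalgebra.Repr k c ιr) :
    dR k A (n+1) (y ⊗ₜ c) =
      ∑ s ∈ S, ∑ i ∈ r.index, (v s ⊗ₜ r.left i) ⊗ₜ (w s * r.right i) := by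
  show (TensorProduct.map LinearMap.id (μA k A))
      ((TensorProduct.tensorTensorTensorComm k (Pk k A n : Type) A A A)
        ((TensorProduct.map (dR k A n) (ΔA k A)) (y ⊗ₜ c))) = _
  rw [TensorProduct.map_tmul, hy, show (ΔA k A) c = Coalgebra.comul c from rfl, ← r.eq]
  simp [sum_tmul, tmul_sum, map_sum, LinearMap.mul'_apply, tensorTensorTensorComm_tmul]
  rw [Finset.sum_comm]

lemma rhoBase_zero_ap (ρ : N →ₗ[k] N ⊗[k] A) (t : N) : rhoBase k A ρ 0 t = ρ t := rfl

lemma rhoBase_succ_ap (ρ : N →ₗ[k] N ⊗[k] A) (p : ℕ)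
    (u : (pwr k A (ModuleCat.of k N) p : Type)) (c : A) :
    rhoBase k A ρ (p+1) (u ⊗ₜ c) = rhoBase k A ρ p u ⊗ₜ c := rfl

lemma shiftB_zero_ap (t : N ⊗[k] A) : shiftB k A 0 t = t := rfl

lemma shiftB_succ_ap (p : ℕ) (u : (pwr k A (ModuleCat.of k (N ⊗[k] A)) p : Type)) (c : A) :
    shiftB k A (p+1) (u ⊗ₜ c) = shiftB k A p u ⊗ₜ c := rfl

lemma lcoBase_zero_ap (ρl : N →ₗ[k] A ⊗[k] N) (t : N) : lcoBase k A ρl 0 t = ρl t := rfl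

lemma lcoBase_succ_ap (ρl : N →ₗ[k] A ⊗[k] N) (p : ℕ) (u : Cd k A N p) (c : A)
    {ι : Type*} {S : Finset ι} {v : ι → A} {w : ι → Cd k A N p}
    (hu : lcoBase k A ρl p u = ∑ s ∈ S, v s ⊗ₜ w s) :
    lcoBase k A ρl (p+1) (u ⊗ₜ c) = ∑ s ∈ S, v s ⊗ₜ (w s ⊗ₜ c) := by
  show (TensorProduct.assoc k A (Cd k A N p) A)
      ((TensorProduct.map (lcoBase k A ρl p) LinearMap.id) (u ⊗ₜ c)) = _
  rw [TensorProduct.map_tmul, hu]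
  simp [sum_tmul, map_sum]

lemma comulAt_top_ap (p : ℕ) (u : Cd k A N p) (c : A) {ιr : Type*} (r : Coalgebra.Repr k c ιr) :
    comulAt k A (p+1) (p+1) (u ⊗ₜ c) = ∑ i ∈ r.index, (u ⊗ₜ r.left i) ⊗ₜ r.right i := by
  simp only [comulAt, reduceIte]
  show (TensorProduct.assoc k (Cd k A N p) A A).symm
      ((TensorProduct.map LinearMap.id (ΔA k A)) (u ⊗ₜ c)) = _
  rw [TensorProduct.map_tmul, LinearMap.id_coe, id_eq, show (ΔA k A) c = Coalgebra.comul c from rfl, ← r.eq]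
  simp [tmul_sum, map_sum]

lemma comulAt_ne_ap (p i : ℕ) (h : i ≠ p+1) (u : Cd k A N p) (c : A) :
    comulAt k A (p+1) i (u ⊗ₜ c) = comulAt k A p i u ⊗ₜ c := by
  simp only [comulAt]; rw [if_neg h]; rfl

lemma lcoDm_ap (ρMl : M →ₗ[k] A ⊗[k] M) {n : ℕ} (x : (Pk k A n : Type)) (m : M)
    {ι κ : Type*} {S : Finset ι} {T : Finset κ}
    {v : ι → A} {w : ι → (Pk k A n : Type)} (hx : dL k A n x = ∑ s ∈ S, v s ⊗ₜ w s)
    {g : κ → A} {h : κ → M} (hm : ρMl m = ∑ t ∈ T, g t ⊗ₜ h t) :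
    lcoDm k A ρMl n (x ⊗ₜ m) =
      ∑ s ∈ S, ∑ t ∈ T, (v s * g t) ⊗ₜ (w s ⊗ₜ h t) := by
  show (TensorProduct.map (μA k A) LinearMap.id)
      ((TensorProduct.tensorTensorTensorComm k A (Pk k A n : Type) A M)
        ((TensorProduct.map (dL k A n) ρMl) (x ⊗ₜ m))) = _
  rw [TensorProduct.map_tmul, hx, hm]
  simp [sum_tmul, tmul_sum, map_sum, LinearMap.mul'_apply, tensorTensorTensorComm_tmul]
  rw [Finset.sum_comm]

lemma rActDm_ap (ωMr : M ⊗[k] A →ₗ[k] M) (n : ℕ) (x : (Pk k A n : Type)) (m : M) (b : A) :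
    rActDm k A ωMr n ((x ⊗ₜ m) ⊗ₜ b) = x ⊗ₜ ωMr (m ⊗ₜ b) := rfl

lemma face0_ap (ωN : A ⊗[k] N →ₗ[k] N) (n p : ℕ) (f : Yc k A M N n p)
    (a : A) (y : (Pk k A n : Type)) (m : M) :
    face0 k A ωN n p f (insP k A n (a ⊗ₜ y) ⊗ₜ m) = ldiag k A ωN p (a ⊗ₜ f (y ⊗ₜ m)) := by
  show ldiag k A ωN p ((TensorProduct.map LinearMap.id f)
      ((TensorProduct.assoc k A (Pk k A n : Type) M)
        ((TensorProduct.map (insP k A n).symm.toLinearMap LinearMap.id)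
          (insP k A n (a ⊗ₜ y) ⊗ₜ m)))) = _
  rw [TensorProduct.map_tmul, LinearEquiv.coe_toLinearMap, LinearEquiv.symm_apply_apply]
  rfl

lemma faceLastH_ap (ωM : A ⊗[k] M →ₗ[k] M) (n p : ℕ) (f : Yc k A M N n p)
    (x : (Pk k A n : Type)) (a : A) (m : M) :
    faceLastH k A ωM n p f ((x ⊗ₜ a) ⊗ₜ m) = f (x ⊗ₜ ωM (a ⊗ₜ m)) := rfl

lemma cofLast_ap (ρM : M →ₗ[k] M ⊗[k] A) (n p : ℕ) (f : Yc k A M N n p)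
    (x : (Pk k A n : Type)) (m : M)
    {ι κ : Type*} {S : Finset ι} {T : Finset κ}
    {y : ι → (Pk k A n : Type)} {z : ι → A} (hx : dR k A n x = ∑ s ∈ S, y s ⊗ₜ z s)
    {g : κ → M} {h : κ → A} (hm : ρM m = ∑ t ∈ T, g t ⊗ₜ h t) :
    cofLast k A ρM n p f (x ⊗ₜ m) =
      ∑ s ∈ S, ∑ t ∈ T, f (y s ⊗ₜ g t) ⊗ₜ (z s * h t) := by
  show (TensorProduct.map f (μA k A))
      ((TensorProduct.tensorTensorTensorComm k (Pk k A n : Type) A M A)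
        ((TensorProduct.map (dR k A n) ρM) (x ⊗ₜ m))) = _
  rw [TensorProduct.map_tmul, hx, hm]
  simp [sum_tmul, tmul_sum, map_sum, LinearMap.mul'_apply, tensorTensorTensorComm_tmul]
  rw [Finset.sum_comm]

lemma cof0H_ap (ρN : N →ₗ[k] N ⊗[k] A) (n p : ℕ) (f : Yc k A M N n p) (z : Dm k A M n) :
    cof0H k A ρN n p f z = shiftB k A p (rhoBase k A ρN p (f z)) := rfl

lemma rightLinear_ap {ωMr : M ⊗[k] A →ₗ[k] M} {ωNr : N ⊗[k] A →ₗ[k] N} {n p : ℕ}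
    {f : Yc k A M N n p} (hf : IsRightLinear k A ωMr ωNr n p f)
    (x : (Pk k A n : Type)) (m : M) (b : A) :
    f (x ⊗ₜ ωMr (m ⊗ₜ b)) = rdiagAct k A ωNr p (f (x ⊗ₜ m) ⊗ₜ b) := by
  have h := LinearMap.congr_fun hf ((x ⊗ₜ m) ⊗ₜ b)
  simpa [rActDm_ap] using h

lemma leftColinear_ap {ρMl : M →ₗ[k] A ⊗[k] M} {ρNl : N →ₗ[k] A ⊗[k] N} {n p : ℕ}
    {f : Yc k A M N n p} (hf : IsLeftColinear k A ρMl ρNl n p f)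
    (x : (Pk k A n : Type)) (m : M)
    {ι κ : Type*} {S : Finset ι} {T : Finset κ}
    {v : ι → A} {w : ι → (Pk k A n : Type)} (hx : dL k A n x = ∑ s ∈ S, v s ⊗ₜ w s)
    {g : κ → A} {h : κ → M} (hm : ρMl m = ∑ t ∈ T, g t ⊗ₜ h t) :
    lcoBase k A ρNl p (f (x ⊗ₜ m)) =
      ∑ s ∈ S, ∑ t ∈ T, (v s * g t) ⊗ₜ f (w s ⊗ₜ h t) := by
  have h2 := LinearMap.congr_fun hf (x ⊗ₜ m)
  rw [LinearMap.comp_apply, LinearMap.comp_apply] at h2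
  rw [h2, lcoDm_ap ρMl x m hx hm]
  simp [map_sum]

lemma hopfLL_ap {ω : A ⊗[k] M →ₗ[k] M} {ρl : M →ₗ[k] A ⊗[k] M}
    (hh : IsHopfLL k A ω ρl) (a : A) (m : M) {ιr : Type*} (r : Coalgebra.Repr k a ιr)
    {κ : Type*} {T : Finset κ} {g : κ → A} {h : κ → M}
    (hm : ρl m = ∑ t ∈ T, g t ⊗ₜ h t) :
    ρl (ω (a ⊗ₜ m)) =
      ∑ i ∈ r.index, ∑ t ∈ T, (r.left i * g t) ⊗ₜ ω (r.right i ⊗ₜ h t) := by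
  have h2 := LinearMap.congr_fun hh (a ⊗ₜ m)
  rw [LinearMap.comp_apply] at h2
  rw [h2]
  show (TensorProduct.map (μA k A) ω)
      ((TensorProduct.tensorTensorTensorComm k A A A M)
        ((TensorProduct.map (ΔA k A) ρl) (a ⊗ₜ m))) = _
  rw [TensorProduct.map_tmul, hm, show (ΔA k A) a = Coalgebra.comul a from rfl, ← r.eq]
  simp [sum_tmul, tmul_sum, map_sum, LinearMap.mul'_apply, tensorTensorTensorComm_tmul]
  rw [Finset.sum_comm]

lemma hopfRR_ap {ωr : M ⊗[k] A →ₗ[k] M} {ρ : M →ₗ[k] M ⊗[k] A}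
    (hh : IsHopfRR k A ωr ρ) (m : M) (b : A)
    {κ : Type*} {T : Finset κ} {g : κ → M} {h : κ → A}
    (hm : ρ m = ∑ t ∈ T, g t ⊗ₜ h t) {ιr : Type*} (r : Coalgebra.Repr k b ιr) :
    ρ (ωr (m ⊗ₜ b)) =
      ∑ t ∈ T, ∑ i ∈ r.index, ωr (g t ⊗ₜ r.left i) ⊗ₜ (h t * r.right i) := by
  have h2 := LinearMap.congr_fun hh (m ⊗ₜ b)
  rw [LinearMap.comp_apply] at h2
  rw [h2]
  show (TensorProduct.map ωr (μA k A))
      ((TensorProduct.tensorTensorTensorComm k M A A A)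
        ((TensorProduct.map ρ (ΔA k A)) (m ⊗ₜ b))) = _
  rw [TensorProduct.map_tmul, hm, show (ΔA k A) b = Coalgebra.comul b from rfl, ← r.eq]
  simp [sum_tmul, tmul_sum, map_sum, LinearMap.mul'_apply, tensorTensorTensorComm_tmul]
  rw [Finset.sum_comm]

end Eval


section Interchange
variable {k : Type} [Field k] {A : Type} [Ring A] [Bialgebra k A]
variable {M N : Type} [AddCommGroup M] [Module k M] [AddCommGroup N] [Module k N]

/-- Primed eval lemmas with the canonical representation, for use with `simp only`. -/
lemma ldiag_succ_ap' (ω : A ⊗[k] N →ₗ[k] N) (p : ℕ) (a : A) (u : Cd k A N p) (c : A) :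
    ldiag k A ω (p+1) (a ⊗ₜ (u ⊗ₜ c)) =
      ∑ i ∈ (ℛ k a).index, ldiag k A ω p ((ℛ k a).left i ⊗ₜ u) ⊗ₜ ((ℛ k a).right i * c) :=
  ldiag_succ_ap ω p a u c (ℛ k a)

lemma rdiag_succ_ap' (ω : N ⊗[k] A →ₗ[k] N) (p : ℕ) (u : Cd k A N p) (c b : A) :
    rdiagAct k A ω (p+1) ((u ⊗ₜ c) ⊗ₜ b) =
      ∑ i ∈ (ℛ k b).index, rdiagAct k A ω p (u ⊗ₜ (ℛ k b).left i) ⊗ₜ (c * (ℛ k b).right i) :=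
  rdiag_succ_ap ω p u c b (ℛ k b)

lemma isRightLinear_iff {ωMr : M ⊗[k] A →ₗ[k] M} {ωNr : N ⊗[k] A →ₗ[k] N} {n p : ℕ}
    {f : Yc k A M N n p} :
    IsRightLinear k A ωMr ωNr n p f ↔
      ∀ (x : (Pk k A n : Type)) (m : M) (b : A),
        f (x ⊗ₜ ωMr (m ⊗ₜ b)) = rdiagAct k A ωNr p (f (x ⊗ₜ m) ⊗ₜ b) := by
  constructor
  · exact fun h x m b => rightLinear_ap h x m b
  · intro h
    unfold IsRightLinear
    apply TensorProduct.ext_threefold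
    intro x m b
    show f (rActDm k A ωMr n ((x ⊗ₜ m) ⊗ₜ b)) =
      rdiagAct k A ωNr p ((TensorProduct.map f LinearMap.id) ((x ⊗ₜ m) ⊗ₜ b))
    rw [rActDm_ap, TensorProduct.map_tmul, LinearMap.id_coe, id_eq]
    exact h x m b

lemma isLeftColinear_iff {ρMl : M →ₗ[k] A ⊗[k] M} {ρNl : N →ₗ[k] A ⊗[k] N} {n p : ℕ}
    {f : Yc k A M N n p} :
    IsLeftColinear k A ρMl ρNl n p f ↔
      ∀ (x : (Pk k A n : Type)) (m : M),
        lcoBase k A ρNl p (f (x ⊗ₜ m)) =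
          (TensorProduct.map LinearMap.id f) (lcoDm k A ρMl n (x ⊗ₜ m)) := by
  constructor
  · intro h x m
    have h2 := LinearMap.congr_fun h (x ⊗ₜ m)
    exact h2
  · intro h
    unfold IsLeftColinear
    apply TensorProduct.ext'
    intro x m
    exact h x m

/-- Left and right diagonal actions commute (`N` a bimodule). -/
lemma ldiag_rdiag (ωl : A ⊗[k] N →ₗ[k] N) (ωr : N ⊗[k] A →ₗ[k] N)
    (hbim : ∀ (a b : A) (x : N), ωr (ωl (a ⊗ₜ x) ⊗ₜ b) = ωl (a ⊗ₜ ωr (x ⊗ₜ b))) :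
    ∀ (p : ℕ) (a : A) (u : Cd k A N p) (b : A),
      ldiag k A ωl p (a ⊗ₜ rdiagAct k A ωr p (u ⊗ₜ b))
        = rdiagAct k A ωr p (ldiag k A ωl p (a ⊗ₜ u) ⊗ₜ b) := by
  intro p
  induction p with
  | zero => intro a u b; exact (hbim a b u).symm
  | succ p IH =>
      intro a u' b
      induction u' using TensorProduct.induction_on with
      | zero => simp
      | add u1 u2 h1 h2 => simp only [tmul_add, add_tmul, map_add, h1, h2]
      | tmul u c =>
          rw [rdiag_succ_ap' ωr p u c b, tmul_sum, map_sum]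
          simp only [ldiag_succ_ap' ωl p a]
          simp only [IH]
          rw [TensorProduct.sum_tmul, map_sum]
          simp only [rdiag_succ_ap' ωr p]
          rw [Finset.sum_comm]
          simp only [mul_assoc]

lemma face0_rightLinear {ωMr : M ⊗[k] A →ₗ[k] M} {ωNr : N ⊗[k] A →ₗ[k] N}
    (ωN : A ⊗[k] N →ₗ[k] N) {n p : ℕ} {f : Yc k A M N n p}
    (hbim : ∀ (a b : A) (x : N), ωNr (ωN (a ⊗ₜ x) ⊗ₜ b) = ωN (a ⊗ₜ ωNr (x ⊗ₜ b)))
    (hf : IsRightLinear k A ωMr ωNr n p f) :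
    IsRightLinear k A ωMr ωNr (n+1) p (face0 k A ωN n p f) := by
  rw [isRightLinear_iff]
  intro x' m b
  obtain ⟨t, rfl⟩ : ∃ t, insP k A n t = x' := ⟨(insP k A n).symm x', by simp⟩
  induction t using TensorProduct.induction_on with
  | zero => simp
  | add t1 t2 h1 h2 => simp only [map_add, add_tmul, h1, h2]
  | tmul a y =>
      rw [face0_ap, face0_ap, rightLinear_ap hf, ldiag_rdiag ωN ωNr hbim]

lemma faceMid_rightLinear {ωMr : M ⊗[k] A →ₗ[k] M} {ωNr : N ⊗[k] A →ₗ[k] N}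
    {n p : ℕ} {f : Yc k A M N n p} (i : ℕ)
    (hf : IsRightLinear k A ωMr ωNr n p f) :
    IsRightLinear k A ωMr ωNr (n+1) p (faceMid k A n p i f) := by
  rw [isRightLinear_iff]
  intro x' m b
  show f ((TensorProduct.map (mulP k A n i) LinearMap.id) (x' ⊗ₜ ωMr (m ⊗ₜ b))) =
    rdiagAct k A ωNr p (f ((TensorProduct.map (mulP k A n i) LinearMap.id) (x' ⊗ₜ m)) ⊗ₜ b)
  simp only [TensorProduct.map_tmul, LinearMap.id_coe, id_eq]
  rw [rightLinear_ap hf]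

lemma faceLastH_rightLinear {ωMr : M ⊗[k] A →ₗ[k] M} {ωNr : N ⊗[k] A →ₗ[k] N}
    (ωM : A ⊗[k] M →ₗ[k] M) {n p : ℕ} {f : Yc k A M N n p}
    (hbim : ∀ (a b : A) (m : M), ωMr (ωM (a ⊗ₜ m) ⊗ₜ b) = ωM (a ⊗ₜ ωMr (m ⊗ₜ b)))
    (hf : IsRightLinear k A ωMr ωNr n p f) :
    IsRightLinear k A ωMr ωNr (n+1) p (faceLastH k A ωM n p f) := by
  rw [isRightLinear_iff]
  intro x' m b
  induction x' using TensorProduct.induction_on with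
  | zero => simp
  | add t1 t2 h1 h2 => simp only [map_add, add_tmul, h1, h2]
  | tmul x a =>
      rw [faceLastH_ap, faceLastH_ap, ← hbim, rightLinear_ap hf]

lemma isRightLinear_sum {ωMr : M ⊗[k] A →ₗ[k] M} {ωNr : N ⊗[k] A →ₗ[k] N}
    {n p : ℕ} {ι : Type*} (s : Finset ι) (c : ι → ℤ) (g : ι → Yc k A M N n p)
    (h : ∀ i ∈ s, IsRightLinear k A ωMr ωNr n p (g i)) :
    IsRightLinear k A ωMr ωNr n p (∑ i ∈ s, c i • g i) := by
  rw [isRightLinear_iff]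
  intro x m b
  rw [LinearMap.sum_apply, LinearMap.sum_apply]
  simp only [TensorProduct.sum_tmul, map_sum]
  apply Finset.sum_congr rfl
  intro i hi
  simp only [LinearMap.smul_apply]
  simp only [rightLinear_ap (h i hi)]
  simp only [← Int.cast_smul_eq_zsmul k]
  rw [← TensorProduct.smul_tmul', map_smul]

end Interchange


section Helpers
variable {k : Type} [Field k] {A : Type} [Ring A] [Bialgebra k A]
variable {M N : Type} [AddCommGroup M] [Module k M] [AddCommGroup N] [Module k N]

/-- Left multiplication as a linear map. -/
def mL (c : A) : A →ₗ[k] A := LinearMap.mulLeft k c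
/-- Right multiplication as a linear map. -/
def mR (c : A) : A →ₗ[k] A := LinearMap.mulRight k c
/-- Tensoring with a fixed element on the left. -/
def tL {X Y : Type} [AddCommGroup X] [Module k X] [AddCommGroup Y] [Module k Y]
    (x : X) : Y →ₗ[k] X ⊗[k] Y := TensorProduct.mk k X Y x
/-- Tensoring with a fixed element on the right. -/
def tR {X Y : Type} [AddCommGroup X] [Module k X] [AddCommGroup Y] [Module k Y]
    (y : Y) : X →ₗ[k] X ⊗[k] Y := (TensorProduct.mk k X Y).flip y

@[simp] lemma mL_ap (c x : A) : (mL (k := k) c) x = c * x := rfl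
@[simp] lemma mR_ap (c x : A) : (mR (k := k) c) x = x * c := rfl
@[simp] lemma tL_ap {X Y : Type} [AddCommGroup X] [Module k X] [AddCommGroup Y] [Module k Y]
    (x : X) (y : Y) : (tL (k := k) x) y = x ⊗ₜ y := rfl
@[simp] lemma tR_ap {X Y : Type} [AddCommGroup X] [Module k X] [AddCommGroup Y] [Module k Y]
    (y : Y) (x : X) : (tR (k := k) y) x = x ⊗ₜ y := rfl

lemma ttt_pure_left {X Y Z W : Type} [AddCommGroup X] [Module k X] [AddCommGroup Y] [Module k Y]
    [AddCommGroup Z] [Module k Z] [AddCommGroup W] [Module k W]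
    (x : X) (y : Y) (t : Z ⊗[k] W) :
    TensorProduct.tensorTensorTensorComm k X Y Z W ((x ⊗ₜ y) ⊗ₜ t) =
      (TensorProduct.map (tL x) (tL y)) t := by
  induction t using TensorProduct.induction_on with
  | zero => simp
  | tmul z w => simp [tensorTensorTensorComm_tmul]
  | add t1 t2 h1 h2 => simp only [tmul_add, map_add, h1, h2]

lemma ttt_pure_right {X Y Z W : Type} [AddCommGroup X] [Module k X] [AddCommGroup Y] [Module k Y]
    [AddCommGroup Z] [Module k Z] [AddCommGroup W] [Module k W]
    (t : X ⊗[k] Y) (z : Z) (w : W) :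
    TensorProduct.tensorTensorTensorComm k X Y Z W (t ⊗ₜ (z ⊗ₜ w)) =
      (TensorProduct.map (tR z) (tR w)) t := by
  induction t using TensorProduct.induction_on with
  | zero => simp
  | tmul x y => simp [tensorTensorTensorComm_tmul]
  | add t1 t2 h1 h2 => simp only [add_tmul, map_add, h1, h2]

lemma assoc_pure_right {X Y Z : Type} [AddCommGroup X] [Module k X] [AddCommGroup Y] [Module k Y]
    [AddCommGroup Z] [Module k Z] (t : X ⊗[k] Y) (z : Z) :
    TensorProduct.assoc k X Y Z (t ⊗ₜ z) = (TensorProduct.map LinearMap.id (tR z)) t := by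
  induction t using TensorProduct.induction_on with
  | zero => simp
  | tmul x y => simp
  | add t1 t2 h1 h2 => simp only [add_tmul, map_add, h1, h2]

lemma assoc_symm_pure_left {X Y Z : Type} [AddCommGroup X] [Module k X] [AddCommGroup Y]
    [Module k Y] [AddCommGroup Z] [Module k Z] (x : X) (t : Y ⊗[k] Z) :
    (TensorProduct.assoc k X Y Z).symm (x ⊗ₜ t) = (TensorProduct.map (tL x) LinearMap.id) t := by
  induction t using TensorProduct.induction_on with
  | zero => simp
  | tmul y z => simp
  | add t1 t2 h1 h2 => simp only [tmul_add, map_add, h1, h2]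

lemma repr_sum_apply {T : Type} [AddCommGroup T] [Module k T] {a : A}
    {ιr : Type*} (r : Coalgebra.Repr k a ιr) (Φ : A ⊗[k] A →ₗ[k] T) :
    ∑ i ∈ r.index, Φ (r.left i ⊗ₜ r.right i) = Φ (Coalgebra.comul a) := by
  rw [← map_sum, r.eq]

lemma repr_sum_eq {T : Type} [AddCommGroup T] [Module k T] {a : A}
    {ιr ιr' : Type*} (r : Coalgebra.Repr k a ιr) (r' : Coalgebra.Repr k a ιr') (Φ : A ⊗[k] A →ₗ[k] T) :
    ∑ i ∈ r.index, Φ (r.left i ⊗ₜ r.right i) =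
      ∑ i ∈ r'.index, Φ (r'.left i ⊗ₜ r'.right i) :=
  (repr_sum_apply r Φ).trans (repr_sum_apply r' Φ).symm

lemma rdiag_succ_map (ω : N ⊗[k] A →ₗ[k] N) (p : ℕ) (t : Cd k A N (p+1)) (b : A) :
    rdiagAct k A ω (p+1) (t ⊗ₜ b) =
      ∑ j ∈ (ℛ k b).index,
        (TensorProduct.map (rdiagAct k A ω p ∘ₗ tR ((ℛ k b).left j))
          (mR ((ℛ k b).right j))) t := by
  induction t using TensorProduct.induction_on with
  | zero => simp
  | tmul u c => rw [rdiag_succ_ap' ω p u c b]; simp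
  | add t1 t2 h1 h2 => simp only [add_tmul, map_add, h1, h2, Finset.sum_add_distrib]

lemma dL_succ_map (n : ℕ) (y : (Pk k A n : Type)) (c : A) :
    dL k A (n+1) (y ⊗ₜ c) =
      ∑ i ∈ (ℛ k c).index,
        (TensorProduct.map (mR ((ℛ k c).left i)) (tR ((ℛ k c).right i))) (dL k A n y) := by
  have h := TensorProduct.exists_finset (dL k A n y)
  obtain ⟨S, hS⟩ := h
  rw [dL_succ_ap y c hS (ℛ k c), hS]
  simp only [map_sum, Finset.sum_comm (s := S)]
  apply Finset.sum_congr rfl; intro i _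
  apply Finset.sum_congr rfl; intro q _
  simp

lemma dR_succ_map (n : ℕ) (y : (Pk k A n : Type)) (c : A) :
    dR k A (n+1) (y ⊗ₜ c) =
      ∑ i ∈ (ℛ k c).index,
        (TensorProduct.map (tR ((ℛ k c).left i)) (mR ((ℛ k c).right i))) (dR k A n y) := by
  obtain ⟨S, hS⟩ := TensorProduct.exists_finset (dR k A n y)
  rw [dR_succ_ap y c hS (ℛ k c), hS]
  simp only [map_sum, Finset.sum_comm (s := S)]
  apply Finset.sum_congr rfl; intro i _
  apply Finset.sum_congr rfl; intro q _
  simp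

lemma hopfLL_map {ω : A ⊗[k] M →ₗ[k] M} {ρl : M →ₗ[k] A ⊗[k] M}
    (hh : IsHopfLL k A ω ρl) (a : A) (m : M) :
    ρl (ω (a ⊗ₜ m)) =
      ∑ i ∈ (ℛ k a).index,
        (TensorProduct.map (mL ((ℛ k a).left i)) (ω ∘ₗ tL ((ℛ k a).right i))) (ρl m) := by
  obtain ⟨T, hT⟩ := TensorProduct.exists_finset (ρl m)
  rw [hopfLL_ap hh a m (ℛ k a) hT, hT]
  simp only [map_sum]
  apply Finset.sum_congr rfl; intro i _
  apply Finset.sum_congr rfl; intro q _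
  simp

lemma hopfRR_map {ωr : M ⊗[k] A →ₗ[k] M} {ρ : M →ₗ[k] M ⊗[k] A}
    (hh : IsHopfRR k A ωr ρ) (m : M) (b : A) :
    ρ (ωr (m ⊗ₜ b)) =
      ∑ j ∈ (ℛ k b).index,
        (TensorProduct.map (ωr ∘ₗ tR ((ℛ k b).left j)) (mR ((ℛ k b).right j))) (ρ m) := by
  obtain ⟨T, hT⟩ := TensorProduct.exists_finset (ρ m)
  rw [hopfRR_ap hh m b hT (ℛ k b), hT]
  simp only [map_sum, Finset.sum_comm (s := T)]
  apply Finset.sum_congr rfl; intro j _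
  apply Finset.sum_congr rfl; intro q _
  simp

lemma dmH_rightLinear {ωM : A ⊗[k] M →ₗ[k] M} {ωMr : M ⊗[k] A →ₗ[k] M}
    {ωN : A ⊗[k] N →ₗ[k] N} {ωNr : N ⊗[k] A →ₗ[k] N} {n p : ℕ} {f : Yc k A M N n p}
    (hMbim : IsBimodule k A ωM ωMr) (hNbim : IsBimodule k A ωN ωNr)
    (hf : IsRightLinear k A ωMr ωNr n p f) :
    IsRightLinear k A ωMr ωNr (n+1) p (dmH k A ωM ωN n p f) := by
  unfold dmH
  apply isRightLinear_sum
  intro i _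
  unfold bH
  split_ifs with h1 h2
  · exact face0_rightLinear ωN (fun a b x => hNbim a b x) hf
  · exact faceMid_rightLinear i hf
  · exact faceLastH_rightLinear ωM (fun a b m => hMbim a b m) hf

end Helpers


section DmColinear
variable {k : Type} [Field k] {A : Type} [Ring A] [Bialgebra k A]
variable {M N : Type} [AddCommGroup M] [Module k M] [AddCommGroup N] [Module k N]

lemma lcoBase_succ_map (ρl : N →ₗ[k] A ⊗[k] N) (p : ℕ) (X : Cd k A N p) (c : A) :
    lcoBase k A ρl (p+1) (X ⊗ₜ c) =
      (TensorProduct.assoc k A (Cd k A N p) A) ((lcoBase k A ρl p X) ⊗ₜ c) := rfl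

lemma lcoDm_map (ρMl : M →ₗ[k] A ⊗[k] M) (n : ℕ) (x : (Pk k A n : Type)) (m : M) :
    lcoDm k A ρMl n (x ⊗ₜ m) =
      (TensorProduct.map (μA k A) LinearMap.id)
        ((TensorProduct.tensorTensorTensorComm k A (Pk k A n : Type) A M)
          ((dL k A n x) ⊗ₜ (ρMl m))) := rfl

/-- `lcoBase` and `ldiag` satisfy the left-left Hopf compatibility (from that of `N`). -/
lemma lcoBase_ldiag {ωN : A ⊗[k] N →ₗ[k] N} {ρNl : N →ₗ[k] A ⊗[k] N}
    (hLL : IsHopfLL k A ωN ρNl) :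
    ∀ (p : ℕ) (a : A) (u : Cd k A N p),
      lcoBase k A ρNl p (ldiag k A ωN p (a ⊗ₜ u)) =
        ∑ i ∈ (ℛ k a).index,
          (TensorProduct.map (mL ((ℛ k a).left i))
            (ldiag k A ωN p ∘ₗ tL ((ℛ k a).right i))) (lcoBase k A ρNl p u) := by
  intro p
  induction p with
  | zero => intro a u; exact hopfLL_map hLL a u
  | succ p IH =>
      intro a u'
      induction u' using TensorProduct.induction_on with
      | zero => simp
      | add t1 t2 h1 h2 =>
          simp only [tmul_add, map_add, h1, h2, Finset.sum_add_distrib]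
      | tmul u c =>
          rw [ldiag_succ_ap' ωN p a u c, map_sum]
          simp only [lcoBase_succ_map, IH]
          have key : ∀ t : A ⊗[k] (Cd k A N p),
              ∑ i ∈ (ℛ k a).index,
                (TensorProduct.assoc k A (Cd k A N p) A)
                  ((∑ j ∈ (ℛ k ((ℛ k a).left i)).index,
                    (TensorProduct.map (mL ((ℛ k ((ℛ k a).left i)).left j))
                      (ldiag k A ωN p ∘ₗ tL ((ℛ k ((ℛ k a).left i)).right j))) t)
                    ⊗ₜ ((ℛ k a).right i * c))
              = ∑ i ∈ (ℛ k a).index,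
                  (TensorProduct.map (mL ((ℛ k a).left i))
                    (ldiag k A ωN (p+1) ∘ₗ tL ((ℛ k a).right i)))
                    ((TensorProduct.assoc k A (Cd k A N p) A) (t ⊗ₜ c)) := by
            intro t
            induction t using TensorProduct.induction_on with
            | zero => simp
            | add t1 t2 h1 h2 =>
                simp only [add_tmul, tmul_add, map_add, h1, h2, Finset.sum_add_distrib]
            | tmul v w =>
                have hc := coassoc_sum
                  (TensorProduct.map (mR v)
                    (TensorProduct.map (ldiag k A ωN p ∘ₗ tR w) (mR c)))
                  (ℛ k a) (fun i => ℛ k ((ℛ k a).left i)) (fun i => ℛ k ((ℛ k a).right i))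
                simp only [TensorProduct.map_tmul, mR_ap, LinearMap.comp_apply, tR_ap] at hc
                simp only [TensorProduct.sum_tmul, map_sum, TensorProduct.map_tmul,
                  LinearMap.comp_apply, mL_ap, tL_ap, TensorProduct.assoc_tmul]
                rw [hc]
                apply Finset.sum_congr rfl; intro i _
                simp only [ldiag_succ_ap' ωN p ((ℛ k a).right i) w c, tmul_sum]
          rw [Finset.sum_congr rfl (fun i _ => lcoBase_succ_map ρNl p _ _), lcoBase_succ_map]
          rw [Finset.sum_congr rfl (fun i _ => congrArg
            (fun z => TensorProduct.assoc k A (Cd k A N p) A (z ⊗ₜ ((ℛ k a).right i * c))) (IH _ u))]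
          exact key (lcoBase k A ρNl p u)

/-- `dL` interchanges with inserting a factor in the innermost slot. -/
lemma dL_insP : ∀ (n : ℕ) (a : A) (y : (Pk k A n : Type)),
    dL k A (n+1) (insP k A n (a ⊗ₜ y)) =
      ∑ i ∈ (ℛ k a).index,
        (TensorProduct.map (mL ((ℛ k a).left i))
          ((insP k A n).toLinearMap ∘ₗ tL ((ℛ k a).right i))) (dL k A n y) := by
  intro n
  induction n with
  | zero =>
      intro a t
      rw [insP_zero_ap, dL_succ_map 0 t a, dL_zero_ap]
      apply Finset.sum_congr rfl; intro i _
      simp [insP_zero_ap]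
      rfl
  | succ n IH =>
      intro a y'
      induction y' using TensorProduct.induction_on with
      | zero => simp
      | add t1 t2 h1 h2 =>
          simp only [tmul_add, map_add, h1, h2, Finset.sum_add_distrib]
      | tmul y c =>
          rw [insP_succ_ap, dL_succ_map (n+1) (insP k A n (a ⊗ₜ y)) c, dL_succ_map n y c]
          simp only [IH, map_sum]
          have key : ∀ t : A ⊗[k] (Pk k A n : Type),
              ∑ j ∈ (ℛ k c).index, ∑ i ∈ (ℛ k a).index,
                (TensorProduct.map (mR ((ℛ k c).left j)) (tR ((ℛ k c).right j)))
                  ((TensorProduct.map (mL ((ℛ k a).left i))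
                    ((insP k A n).toLinearMap ∘ₗ tL ((ℛ k a).right i))) t)
              = ∑ i ∈ (ℛ k a).index, ∑ j ∈ (ℛ k c).index,
                  (TensorProduct.map (mL ((ℛ k a).left i))
                    ((insP k A (n+1)).toLinearMap ∘ₗ tL ((ℛ k a).right i)))
                    ((TensorProduct.map (mR ((ℛ k c).left j)) (tR ((ℛ k c).right j))) t) := by
            intro t
            induction t using TensorProduct.induction_on with
            | zero => simp
            | add t1 t2 h1 h2 =>
                simp only [map_add, h1, h2, Finset.sum_add_distrib]
            | tmul v w =>
                simp only [map_sum, TensorProduct.map_tmul, mL_ap, mR_ap, tL_ap, tR_ap,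
                  LinearMap.comp_apply, LinearEquiv.coe_coe, insP_succ_ap]
                rw [Finset.sum_comm]
                simp only [mul_assoc]
                rfl
          exact key (dL k A n y)

lemma mulP_ne_map (n i : ℕ) (h : i ≠ n+1) :
    mulP k A (n+1) i =
      TensorProduct.map (mulP k A n i) (LinearMap.id : A →ₗ[k] A) := by
  simp only [mulP, if_neg h]

lemma map_id_zero {X Y Z W : Type} [AddCommGroup X] [Module k X] [AddCommGroup Y] [Module k Y]
    [AddCommGroup Z] [Module k Z] [AddCommGroup W] [Module k W] {F : X →ₗ[k] Y} :
    TensorProduct.map F (0 : Z →ₗ[k] W) = 0 := by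
  apply TensorProduct.ext'
  intro x z
  simp

/-- `dL` interchanges with multiplying two adjacent slots. -/
lemma dL_mulP : ∀ (n i : ℕ) (x' : (Pk k A (n+1) : Type)),
    (TensorProduct.map LinearMap.id (mulP k A n i)) (dL k A (n+1) x')
      = dL k A n (mulP k A n i x') := by
  intro n
  induction n with
  | zero =>
      intro i x'
      simp only [mulP, map_id_zero, LinearMap.zero_apply, map_zero]
  | succ n IH =>
      intro i x'
      induction x' using TensorProduct.induction_on with
      | zero => simp
      | add t1 t2 h1 h2 => simp only [map_add, h1, h2]
      | tmul w c =>
          by_cases hi : i = n + 1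
          · subst hi
            induction w using TensorProduct.induction_on with
            | zero => simp
            | add w1 w2 g1 g2 => simp only [map_add, add_tmul, g1, g2]
            | tmul y a =>
                rw [mulP_top_ap, dL_succ_map (n+1) (y ⊗ₜ a) c, dL_succ_map n y a,
                  dL_succ_map n y (a * c)]
                simp only [map_sum]
                have key : ∀ t : A ⊗[k] (Pk k A n : Type),
                    ∑ j ∈ (ℛ k c).index, ∑ i2 ∈ (ℛ k a).index,
                      (TensorProduct.map LinearMap.id (mulP k A (n+1) (n+1)))
                        ((TensorProduct.map (mR ((ℛ k c).left j)) (tR ((ℛ k c).right j)))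
                          ((TensorProduct.map (mR ((ℛ k a).left i2)) (tR ((ℛ k a).right i2))) t))
                    = ∑ q ∈ (ℛ k (a * c)).index,
                        (TensorProduct.map (mR ((ℛ k (a * c)).left q))
                          (tR ((ℛ k (a * c)).right q))) t := by
                  intro t
                  induction t using TensorProduct.induction_on with
                  | zero => simp
                  | add t1 t2 h1 h2 =>
                      simp only [map_add, h1, h2, Finset.sum_add_distrib]
                  | tmul e v =>
                      have hrep := repr_sum_eq (ℛ k (a * c)) (mulRepr (ℛ k a) (ℛ k c))
                        (TensorProduct.map (mL e) (tL v))
                      simp only [TensorProduct.map_tmul, mL_ap, tL_ap, mulRepr,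
                        Finset.sum_product] at hrep
                      simp only [TensorProduct.map_tmul, mR_ap, tR_ap, mulP_top_ap,
                        LinearMap.id_coe, id_eq]
                      rw [hrep, Finset.sum_comm]
                      simp only [mul_assoc]
                      apply Finset.sum_congr rfl; intro i _
                      apply Finset.sum_congr rfl; intro j _
                      rw [mulP_top_ap]
                exact key (dL k A n y)
          · rw [mulP_ne_ap n i hi w c,
              dL_succ_map n (mulP k A n i w) c, dL_succ_map (n+1) w c, mulP_ne_map n i hi]
            simp only [map_sum, ← IH i w]
            have key : ∀ t : A ⊗[k] (Pk k A (n+1) : Type),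
                ∑ j ∈ (ℛ k c).index,
                  (TensorProduct.map LinearMap.id
                    (TensorProduct.map (mulP k A n i) LinearMap.id))
                    ((TensorProduct.map (mR ((ℛ k c).left j)) (tR ((ℛ k c).right j))) t)
                = ∑ j ∈ (ℛ k c).index,
                    (TensorProduct.map (mR ((ℛ k c).left j)) (tR ((ℛ k c).right j)))
                      ((TensorProduct.map LinearMap.id (mulP k A n i)) t) := by
              intro t
              induction t using TensorProduct.induction_on with
              | zero => simp
              | add t1 t2 h1 h2 => simp only [map_add, h1, h2, Finset.sum_add_distrib]
              | tmul e v =>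
                  simp only [TensorProduct.map_tmul, mR_ap, tR_ap, LinearMap.id_coe, id_eq]
            exact key (dL k A (n+1) w)

end DmColinear


section DmColinear2
variable {k : Type} [Field k] {A : Type} [Ring A] [Bialgebra k A]
variable {M N : Type} [AddCommGroup M] [Module k M] [AddCommGroup N] [Module k N]

lemma faceMid_ap (n p : ℕ) (i : ℕ) (f : Yc k A M N n p) (x' : (Pk k A (n+1) : Type)) (m : M) :
    faceMid k A n p i f (x' ⊗ₜ m) = f (mulP k A n i x' ⊗ₜ m) := rfl

lemma face0_leftColinear {ωN : A ⊗[k] N →ₗ[k] N} {ρMl : M →ₗ[k] A ⊗[k] M}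
    {ρNl : N →ₗ[k] A ⊗[k] N} (hLLN : IsHopfLL k A ωN ρNl) {n p : ℕ} {f : Yc k A M N n p}
    (hf : IsLeftColinear k A ρMl ρNl n p f) :
    IsLeftColinear k A ρMl ρNl (n+1) p (face0 k A ωN n p f) := by
  rw [isLeftColinear_iff]
  intro x' m
  obtain ⟨t, rfl⟩ : ∃ t, insP k A n t = x' := ⟨(insP k A n).symm x', by simp⟩
  induction t using TensorProduct.induction_on with
  | zero => simp
  | add t1 t2 h1 h2 => simp only [map_add, add_tmul, h1, h2]
  | tmul a y =>
      rw [face0_ap, lcoBase_ldiag hLLN p a (f (y ⊗ₜ m)),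
        isLeftColinear_iff.mp hf y m, lcoDm_map, lcoDm_map, dL_insP n a y,
        TensorProduct.sum_tmul, map_sum, map_sum, map_sum]
      have key : ∀ (t : A ⊗[k] (Pk k A n : Type)) (s : A ⊗[k] M),
          ∑ i ∈ (ℛ k a).index,
            (TensorProduct.map (mL ((ℛ k a).left i))
              (ldiag k A ωN p ∘ₗ tL ((ℛ k a).right i)))
              ((TensorProduct.map LinearMap.id f)
                ((TensorProduct.map (μA k A) LinearMap.id)
                  ((TensorProduct.tensorTensorTensorComm k A (Pk k A n : Type) A M)
                    (t ⊗ₜ s))))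
          = ∑ i ∈ (ℛ k a).index,
              (TensorProduct.map LinearMap.id (face0 k A ωN n p f))
                ((TensorProduct.map (μA k A) LinearMap.id)
                  ((TensorProduct.tensorTensorTensorComm k A (Pk k A (n+1) : Type) A M)
                    (((TensorProduct.map (mL ((ℛ k a).left i))
                      ((insP k A n).toLinearMap ∘ₗ tL ((ℛ k a).right i))) t) ⊗ₜ s))) := by
        intro t s
        induction t using TensorProduct.induction_on with
        | zero => simp
        | add t1 t2 h1 h2 =>
            simp only [map_add, add_tmul, h1, h2, Finset.sum_add_distrib]
        | tmul e v =>
            induction s using TensorProduct.induction_on with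
            | zero => simp
            | add s1 s2 g1 g2 =>
                simp only [map_add, tmul_add, g1, g2, Finset.sum_add_distrib]
            | tmul g h =>
                apply Finset.sum_congr rfl; intro i _
                simp only [TensorProduct.map_tmul, tensorTensorTensorComm_tmul,
                  LinearMap.comp_apply, LinearMap.id_coe, id_eq, mL_ap, tL_ap,
                  LinearEquiv.coe_coe, LinearMap.mul'_apply, μA]
                rw [face0_ap]
                simp only [mul_assoc]
      exact key (dL k A n y) (ρMl m)

lemma faceLastH_leftColinear {ωM : A ⊗[k] M →ₗ[k] M} {ρMl : M →ₗ[k] A ⊗[k] M}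
    {ρNl : N →ₗ[k] A ⊗[k] N} (hLLM : IsHopfLL k A ωM ρMl) {n p : ℕ} {f : Yc k A M N n p}
    (hf : IsLeftColinear k A ρMl ρNl n p f) :
    IsLeftColinear k A ρMl ρNl (n+1) p (faceLastH k A ωM n p f) := by
  rw [isLeftColinear_iff]
  intro x' m
  induction x' using TensorProduct.induction_on with
  | zero => simp
  | add t1 t2 h1 h2 => simp only [map_add, add_tmul, h1, h2]
  | tmul x a =>
      rw [faceLastH_ap, isLeftColinear_iff.mp hf x (ωM (a ⊗ₜ m)), lcoDm_map, lcoDm_map,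
        hopfLL_map hLLM a m, dL_succ_map n x a]
      simp only [TensorProduct.sum_tmul, TensorProduct.tmul_sum, map_sum]
      have key : ∀ (t : A ⊗[k] (Pk k A n : Type)) (s : A ⊗[k] M),
          ∑ i ∈ (ℛ k a).index,
            (TensorProduct.map LinearMap.id f)
              ((TensorProduct.map (μA k A) LinearMap.id)
                ((TensorProduct.tensorTensorTensorComm k A (Pk k A n : Type) A M)
                  (t ⊗ₜ ((TensorProduct.map (mL ((ℛ k a).left i))
                    (ωM ∘ₗ tL ((ℛ k a).right i))) s))))
          = ∑ i ∈ (ℛ k a).index,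
              (TensorProduct.map LinearMap.id (faceLastH k A ωM n p f))
                ((TensorProduct.map (μA k A) LinearMap.id)
                  ((TensorProduct.tensorTensorTensorComm k A (Pk k A (n+1) : Type) A M)
                    (((TensorProduct.map (mR ((ℛ k a).left i)) (tR ((ℛ k a).right i))) t)
                      ⊗ₜ s))) := by
        intro t s
        induction t using TensorProduct.induction_on with
        | zero => simp
        | add t1 t2 h1 h2 =>
            simp only [map_add, add_tmul, h1, h2, Finset.sum_add_distrib]
        | tmul e v =>
            induction s using TensorProduct.induction_on with
            | zero => simp
            | add s1 s2 g1 g2 =>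
                simp only [map_add, tmul_add, g1, g2, Finset.sum_add_distrib]
            | tmul g h =>
                apply Finset.sum_congr rfl; intro i _
                simp only [TensorProduct.map_tmul, tensorTensorTensorComm_tmul,
                  LinearMap.comp_apply, LinearMap.id_coe, id_eq, mL_ap, mR_ap, tL_ap, tR_ap,
                  LinearEquiv.coe_coe, LinearMap.mul'_apply, μA]
                rw [faceLastH_ap]
                simp only [mul_assoc]
      exact key (dL k A n x) (ρMl m)

lemma faceMid_leftColinear {ρMl : M →ₗ[k] A ⊗[k] M} {ρNl : N →ₗ[k] A ⊗[k] N}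
    {n p : ℕ} {f : Yc k A M N n p} (i : ℕ)
    (hf : IsLeftColinear k A ρMl ρNl n p f) :
    IsLeftColinear k A ρMl ρNl (n+1) p (faceMid k A n p i f) := by
  rw [isLeftColinear_iff]
  intro x' m
  rw [faceMid_ap, isLeftColinear_iff.mp hf (mulP k A n i x') m, lcoDm_map, lcoDm_map,
    ← dL_mulP n i x']
  have key : ∀ (t : A ⊗[k] (Pk k A (n+1) : Type)) (s : A ⊗[k] M),
      (TensorProduct.map LinearMap.id f)
        ((TensorProduct.map (μA k A) LinearMap.id)
          ((TensorProduct.tensorTensorTensorComm k A (Pk k A n : Type) A M)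
            (((TensorProduct.map LinearMap.id (mulP k A n i)) t) ⊗ₜ s)))
      = (TensorProduct.map LinearMap.id (faceMid k A n p i f))
          ((TensorProduct.map (μA k A) LinearMap.id)
            ((TensorProduct.tensorTensorTensorComm k A (Pk k A (n+1) : Type) A M)
              (t ⊗ₜ s))) := by
    intro t s
    induction t using TensorProduct.induction_on with
    | zero => simp
    | add t1 t2 h1 h2 => simp only [map_add, add_tmul, h1, h2]
    | tmul e v =>
        induction s using TensorProduct.induction_on with
        | zero => simp
        | add s1 s2 g1 g2 => simp only [map_add, tmul_add, g1, g2]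
        | tmul g h =>
            simp only [TensorProduct.map_tmul, tensorTensorTensorComm_tmul,
              LinearMap.comp_apply, LinearMap.id_coe, id_eq,
              LinearEquiv.coe_coe, LinearMap.mul'_apply, μA]
            rw [faceMid_ap]
  exact key (dL k A (n+1) x') (ρMl m)

lemma map_id_sum_right {X Y Z : Type} [AddCommGroup X] [Module k X] [AddCommGroup Y]
    [Module k Y] [AddCommGroup Z] [Module k Z] {ι : Type*} (s : Finset ι)
    (g : ι → (X →ₗ[k] Y)) :
    TensorProduct.map (LinearMap.id : Z →ₗ[k] Z) (∑ i ∈ s, g i)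
      = ∑ i ∈ s, TensorProduct.map LinearMap.id (g i) := by
  apply TensorProduct.ext'
  intro z x
  simp [TensorProduct.tmul_sum]

lemma isLeftColinear_sum {ρMl : M →ₗ[k] A ⊗[k] M} {ρNl : N →ₗ[k] A ⊗[k] N}
    {n p : ℕ} {ι : Type*} (s : Finset ι) (c : ι → ℤ) (g : ι → Yc k A M N n p)
    (h : ∀ i ∈ s, IsLeftColinear k A ρMl ρNl n p (g i)) :
    IsLeftColinear k A ρMl ρNl n p (∑ i ∈ s, c i • g i) := by
  rw [isLeftColinear_iff]
  intro x m
  simp only [← Int.cast_smul_eq_zsmul k]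
  rw [LinearMap.sum_apply, map_sum]
  rw [show TensorProduct.map (LinearMap.id : A →ₗ[k] A) (∑ i ∈ s, ((c i : k)) • g i)
      = ∑ i ∈ s, TensorProduct.map LinearMap.id (((c i : k)) • g i) from
    map_id_sum_right s _]
  rw [LinearMap.sum_apply]
  apply Finset.sum_congr rfl
  intro i hi
  rw [LinearMap.smul_apply, map_smul, TensorProduct.map_smul_right, LinearMap.smul_apply]
  rw [isLeftColinear_iff.mp (h i hi) x m]

lemma dmH_leftColinear {ωM : A ⊗[k] M →ₗ[k] M} {ρMl : M →ₗ[k] A ⊗[k] M}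
    {ωN : A ⊗[k] N →ₗ[k] N} {ρNl : N →ₗ[k] A ⊗[k] N} {n p : ℕ} {f : Yc k A M N n p}
    (hLLM : IsHopfLL k A ωM ρMl) (hLLN : IsHopfLL k A ωN ρNl)
    (hf : IsLeftColinear k A ρMl ρNl n p f) :
    IsLeftColinear k A ρMl ρNl (n+1) p (dmH k A ωM ωN n p f) := by
  unfold dmH
  apply isLeftColinear_sum
  intro i _
  unfold bH
  split_ifs with h1 h2
  · exact face0_leftColinear hLLN hf
  · exact faceMid_leftColinear i hf
  · exact faceLastH_leftColinear hLLM hf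

end DmColinear2


section DcPart1
variable {k : Type} [Field k] {A : Type} [Ring A] [Bialgebra k A]
variable {M N : Type} [AddCommGroup M] [Module k M] [AddCommGroup N] [Module k N]

lemma lcoBase_succ_opaque (ρl : N →ₗ[k] A ⊗[k] N) (p : ℕ) (t : Cd k A N (p+1)) :
    lcoBase k A ρl (p+1) t =
      (TensorProduct.assoc k A (Cd k A N p) A)
        ((TensorProduct.map (lcoBase k A ρl p) LinearMap.id) t) := rfl

/-- Right diagonal action commutes with `shiftB ∘ rhoBase` (from `IsHopfRR` for `N`). -/
lemma rdiag_shiftRho {ωNr : N ⊗[k] A →ₗ[k] N} {ρN : N →ₗ[k] N ⊗[k] A}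
    (hRR : IsHopfRR k A ωNr ρN) :
    ∀ (p : ℕ) (u : Cd k A N p) (b : A),
      rdiagAct k A ωNr (p+1) ((shiftB k A p) ((rhoBase k A ρN p) u) ⊗ₜ b)
        = (shiftB k A p) ((rhoBase k A ρN p) (rdiagAct k A ωNr p (u ⊗ₜ b))) := by
  intro p
  induction p with
  | zero =>
      intro u b
      rw [shiftB_zero_ap, rhoBase_zero_ap, rdiag_succ_map ωNr 0 (ρN u) b,
        shiftB_zero_ap, rhoBase_zero_ap, rdiag_zero_ap, hopfRR_map hRR u b]
      rfl
  | succ p IH =>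
      intro u' b
      induction u' using TensorProduct.induction_on with
      | zero => simp
      | add t1 t2 h1 h2 => simp only [map_add, add_tmul, h1, h2]
      | tmul u c =>
          rw [rhoBase_succ_ap, shiftB_succ_ap,
            rdiag_succ_ap' ωNr (p+1) (shiftB k A p (rhoBase k A ρN p u)) c b,
            rdiag_succ_ap' ωNr p u c b, map_sum, map_sum]
          apply Finset.sum_congr rfl
          intro j _
          rw [IH u ((ℛ k b).left j), rhoBase_succ_ap, shiftB_succ_ap]

lemma cof0H_rightLinear {ωMr : M ⊗[k] A →ₗ[k] M} {ωNr : N ⊗[k] A →ₗ[k] N}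
    {ρN : N →ₗ[k] N ⊗[k] A} (hRR : IsHopfRR k A ωNr ρN) {n p : ℕ} {f : Yc k A M N n p}
    (hf : IsRightLinear k A ωMr ωNr n p f) :
    IsRightLinear k A ωMr ωNr n (p+1) (cof0H k A ρN n p f) := by
  rw [isRightLinear_iff]
  intro x m b
  rw [cof0H_ap, cof0H_ap, rightLinear_ap hf, rdiag_shiftRho hRR p (f (x ⊗ₜ m)) b]

/-- `lcoBase` commutes with `shiftB ∘ rhoBase` (from bicomodularity of `N`). -/
lemma lcoBase_shiftRho {ρNl : N →ₗ[k] A ⊗[k] N} {ρN : N →ₗ[k] N ⊗[k] A}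
    (hBC : IsBicomodule k A ρNl ρN) :
    ∀ (p : ℕ) (u : Cd k A N p),
      lcoBase k A ρNl (p+1) (shiftB k A p (rhoBase k A ρN p u))
        = (TensorProduct.map LinearMap.id
            ((shiftB k A p).toLinearMap ∘ₗ rhoBase k A ρN p)) (lcoBase k A ρNl p u) := by
  intro p
  induction p with
  | zero =>
      intro u
      have h := LinearMap.congr_fun hBC u
      simp only [LinearMap.comp_apply] at h
      have key : ∀ t : A ⊗[k] N,
          (TensorProduct.map LinearMap.id ρN) t =
            (TensorProduct.map LinearMap.id
              ((shiftB k A 0).toLinearMap ∘ₗ rhoBase k A ρN 0)) t := by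
        intro t
        induction t using TensorProduct.induction_on with
        | zero => simp
        | add t1 t2 h1 h2 => simp only [map_add, h1, h2]
        | tmul v w => rfl
      rw [shiftB_zero_ap, rhoBase_zero_ap, lcoBase_succ_opaque]
      exact h.symm.trans (key (ρNl u))
  | succ p IH =>
      intro u'
      induction u' using TensorProduct.induction_on with
      | zero => simp
      | add t1 t2 h1 h2 => simp only [map_add, h1, h2]
      | tmul u c =>
          rw [rhoBase_succ_ap, shiftB_succ_ap, lcoBase_succ_map, IH u, lcoBase_succ_map]
          have key : ∀ t : A ⊗[k] (Cd k A N p),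
              (TensorProduct.assoc k A (Cd k A N (p+1)) A)
                (((TensorProduct.map LinearMap.id
                  ((shiftB k A p).toLinearMap ∘ₗ rhoBase k A ρN p)) t) ⊗ₜ c)
              = (TensorProduct.map LinearMap.id
                  ((shiftB k A (p+1)).toLinearMap ∘ₗ rhoBase k A ρN (p+1)))
                  ((TensorProduct.assoc k A (Cd k A N p) A) (t ⊗ₜ c)) := by
            intro t
            induction t using TensorProduct.induction_on with
            | zero => simp
            | add t1 t2 h1 h2 => simp only [map_add, add_tmul, h1, h2]
            | tmul v w =>
                simp only [TensorProduct.map_tmul, TensorProduct.assoc_tmul,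
                  LinearMap.comp_apply, LinearMap.id_coe, id_eq, LinearEquiv.coe_coe]
                rw [rhoBase_succ_ap, shiftB_succ_ap]
          exact key (lcoBase k A ρNl p u)

lemma cof0H_leftColinear {ρMl : M →ₗ[k] A ⊗[k] M} {ρNl : N →ₗ[k] A ⊗[k] N}
    {ρN : N →ₗ[k] N ⊗[k] A} (hBC : IsBicomodule k A ρNl ρN) {n p : ℕ} {f : Yc k A M N n p}
    (hf : IsLeftColinear k A ρMl ρNl n p f) :
    IsLeftColinear k A ρMl ρNl n (p+1) (cof0H k A ρN n p f) := by
  rw [isLeftColinear_iff]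
  intro x m
  rw [cof0H_ap, lcoBase_shiftRho hBC p (f (x ⊗ₜ m)), isLeftColinear_iff.mp hf x m]
  have key : ∀ t : A ⊗[k] (Dm k A M n),
      (TensorProduct.map LinearMap.id ((shiftB k A p).toLinearMap ∘ₗ rhoBase k A ρN p))
        ((TensorProduct.map LinearMap.id f) t)
      = (TensorProduct.map LinearMap.id (cof0H k A ρN n p f)) t := by
    intro t
    induction t using TensorProduct.induction_on with
    | zero => simp
    | add t1 t2 h1 h2 => simp only [map_add, h1, h2]
    | tmul v w =>
        simp only [TensorProduct.map_tmul, LinearMap.comp_apply, LinearMap.id_coe, id_eq,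
          LinearEquiv.coe_coe]
        rw [cof0H_ap]
  exact key (lcoDm k A ρMl n (x ⊗ₜ m))

/-- The right diagonal action commutes with `comulAt` (uses coassociativity). -/
lemma rdiag_comulAt (ω : N ⊗[k] A →ₗ[k] N) :
    ∀ (p j : ℕ) (u : Cd k A N p) (b : A),
      rdiagAct k A ω (p+1) (comulAt k A p j u ⊗ₜ b)
        = comulAt k A p j (rdiagAct k A ω p (u ⊗ₜ b)) := by
  intro p
  induction p with
  | zero =>
      intro j u b
      simp only [comulAt, LinearMap.zero_apply, TensorProduct.zero_tmul, map_zero]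
  | succ p IH =>
      intro j u' b
      induction u' using TensorProduct.induction_on with
      | zero => simp
      | add t1 t2 h1 h2 => simp only [map_add, add_tmul, h1, h2]
      | tmul u c =>
          by_cases hj : j = p + 1
          · subst hj
            rw [comulAt_top_ap p u c (ℛ k c), TensorProduct.sum_tmul, map_sum,
              rdiag_succ_ap' ω p u c b, map_sum]
            have hL : ∀ i ∈ (ℛ k c).index,
                rdiagAct k A ω (p+2) (((u ⊗ₜ (ℛ k c).left i) ⊗ₜ (ℛ k c).right i) ⊗ₜ b)
                = ∑ j2 ∈ (ℛ k b).index, ∑ j3 ∈ (ℛ k ((ℛ k b).left j2)).index,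
                    (rdiagAct k A ω p (u ⊗ₜ (ℛ k ((ℛ k b).left j2)).left j3)
                      ⊗ₜ ((ℛ k c).left i * (ℛ k ((ℛ k b).left j2)).right j3))
                      ⊗ₜ ((ℛ k c).right i * (ℛ k b).right j2) := by
              intro i _
              rw [rdiag_succ_ap' ω (p+1) (u ⊗ₜ (ℛ k c).left i) ((ℛ k c).right i) b]
              apply Finset.sum_congr rfl
              intro j2 _
              rw [rdiag_succ_ap' ω p u ((ℛ k c).left i) ((ℛ k b).left j2),
                TensorProduct.sum_tmul]
            rw [Finset.sum_congr rfl hL]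
            have hR : ∀ j2 ∈ (ℛ k b).index,
                comulAt k A (p+1) (p+1)
                  (rdiagAct k A ω p (u ⊗ₜ (ℛ k b).left j2) ⊗ₜ (c * (ℛ k b).right j2))
                = ∑ i ∈ (ℛ k c).index, ∑ i2 ∈ (ℛ k ((ℛ k b).right j2)).index,
                    (rdiagAct k A ω p (u ⊗ₜ (ℛ k b).left j2)
                      ⊗ₜ ((ℛ k c).left i * (ℛ k ((ℛ k b).right j2)).left i2))
                      ⊗ₜ ((ℛ k c).right i * (ℛ k ((ℛ k b).right j2)).right i2) := by
              intro j2 _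
              rw [comulAt_top_ap p (rdiagAct k A ω p (u ⊗ₜ (ℛ k b).left j2))
                (c * (ℛ k b).right j2) (mulRepr (ℛ k c) (ℛ k ((ℛ k b).right j2)))]
              simp only [mulRepr, Finset.sum_product]
            rw [Finset.sum_congr rfl hR]
            have hc := coassoc_sum
              ((∑ i ∈ (ℛ k c).index,
                (TensorProduct.map
                  (TensorProduct.map (rdiagAct k A ω p ∘ₗ tL u) (mL ((ℛ k c).left i)))
                  (mL ((ℛ k c).right i))) ∘ₗ
                  (TensorProduct.assoc k A A A).symm.toLinearMap))
              (ℛ k b) (fun j2 => ℛ k ((ℛ k b).left j2)) (fun j2 => ℛ k ((ℛ k b).right j2))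
            simp only [LinearMap.sum_apply, LinearMap.comp_apply, LinearEquiv.coe_coe,
              TensorProduct.assoc_symm_tmul, TensorProduct.map_tmul, mL_ap,
              LinearMap.id_coe, id_eq, tL_ap] at hc
            rw [Finset.sum_comm]
            calc ∑ j2 ∈ (ℛ k b).index, ∑ i ∈ (ℛ k c).index,
                  ∑ j3 ∈ (ℛ k ((ℛ k b).left j2)).index,
                    (rdiagAct k A ω p (u ⊗ₜ (ℛ k ((ℛ k b).left j2)).left j3)
                      ⊗ₜ ((ℛ k c).left i * (ℛ k ((ℛ k b).left j2)).right j3))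
                      ⊗ₜ ((ℛ k c).right i * (ℛ k b).right j2)
                = ∑ j2 ∈ (ℛ k b).index, ∑ j3 ∈ (ℛ k ((ℛ k b).left j2)).index,
                  ∑ i ∈ (ℛ k c).index,
                    (rdiagAct k A ω p (u ⊗ₜ (ℛ k ((ℛ k b).left j2)).left j3)
                      ⊗ₜ ((ℛ k c).left i * (ℛ k ((ℛ k b).left j2)).right j3))
                      ⊗ₜ ((ℛ k c).right i * (ℛ k b).right j2) := by
                  exact Finset.sum_congr rfl (fun j2 _ => Finset.sum_comm)
              _ = ∑ j2 ∈ (ℛ k b).index, ∑ i2 ∈ (ℛ k ((ℛ k b).right j2)).index,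
                  ∑ i ∈ (ℛ k c).index,
                    (rdiagAct k A ω p (u ⊗ₜ (ℛ k b).left j2)
                      ⊗ₜ ((ℛ k c).left i * (ℛ k ((ℛ k b).right j2)).left i2))
                      ⊗ₜ ((ℛ k c).right i * (ℛ k ((ℛ k b).right j2)).right i2) := hc
              _ = ∑ j2 ∈ (ℛ k b).index, ∑ i ∈ (ℛ k c).index,
                  ∑ i2 ∈ (ℛ k ((ℛ k b).right j2)).index,
                    (rdiagAct k A ω p (u ⊗ₜ (ℛ k b).left j2)
                      ⊗ₜ ((ℛ k c).left i * (ℛ k ((ℛ k b).right j2)).left i2))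
                      ⊗ₜ ((ℛ k c).right i * (ℛ k ((ℛ k b).right j2)).right i2) := by
                  exact Finset.sum_congr rfl (fun j2 _ => Finset.sum_comm)
          · rw [comulAt_ne_ap p j hj u c,
              rdiag_succ_ap' ω (p+1) (comulAt k A p j u) c b,
              rdiag_succ_ap' ω p u c b, map_sum]
            apply Finset.sum_congr rfl
            intro j2 _
            rw [IH j u ((ℛ k b).left j2), comulAt_ne_ap p j hj]

lemma comulAt_rightLinear {ωMr : M ⊗[k] A →ₗ[k] M} {ωNr : N ⊗[k] A →ₗ[k] N}
    {n p : ℕ} {f : Yc k A M N n p} (j : ℕ)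
    (hf : IsRightLinear k A ωMr ωNr n p f) :
    IsRightLinear k A ωMr ωNr n (p+1) ((comulAt k A p j).comp f) := by
  rw [isRightLinear_iff]
  intro x m b
  show comulAt k A p j (f (x ⊗ₜ ωMr (m ⊗ₜ b))) =
    rdiagAct k A ωNr (p+1) (comulAt k A p j (f (x ⊗ₜ m)) ⊗ₜ b)
  rw [rightLinear_ap hf, rdiag_comulAt ωNr p j (f (x ⊗ₜ m)) b]

/-- `lcoBase` commutes with `comulAt`. -/
lemma lcoBase_comulAt (ρNl : N →ₗ[k] A ⊗[k] N) :
    ∀ (p j : ℕ) (u : Cd k A N p),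
      lcoBase k A ρNl (p+1) (comulAt k A p j u)
        = (TensorProduct.map LinearMap.id (comulAt k A p j)) (lcoBase k A ρNl p u) := by
  intro p
  induction p with
  | zero =>
      intro j u
      simp only [comulAt, LinearMap.zero_apply, map_zero, map_id_zero]
  | succ p IH =>
      intro j u'
      induction u' using TensorProduct.induction_on with
      | zero => simp
      | add t1 t2 h1 h2 => simp only [map_add, h1, h2]
      | tmul u c =>
          by_cases hj : j = p + 1
          · subst hj
            rw [comulAt_top_ap p u c (ℛ k c), map_sum]
            have hL : ∀ i ∈ (ℛ k c).index,
                lcoBase k A ρNl (p+2) ((u ⊗ₜ (ℛ k c).left i) ⊗ₜ (ℛ k c).right i)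
                = (TensorProduct.assoc k A (Cd k A N (p+1)) A)
                    (((TensorProduct.assoc k A (Cd k A N p) A)
                      ((lcoBase k A ρNl p u) ⊗ₜ (ℛ k c).left i)) ⊗ₜ (ℛ k c).right i) := by
              intro i _
              rw [lcoBase_succ_map, lcoBase_succ_map]
            rw [Finset.sum_congr rfl hL, lcoBase_succ_map]
            have key : ∀ t : A ⊗[k] (Cd k A N p),
                ∑ i ∈ (ℛ k c).index,
                  (TensorProduct.assoc k A (Cd k A N (p+1)) A)
                    (((TensorProduct.assoc k A (Cd k A N p) A)
                      (t ⊗ₜ (ℛ k c).left i)) ⊗ₜ (ℛ k c).right i)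
                = (TensorProduct.map LinearMap.id (comulAt k A (p+1) (p+1)))
                    ((TensorProduct.assoc k A (Cd k A N p) A) (t ⊗ₜ c)) := by
              intro t
              induction t using TensorProduct.induction_on with
              | zero => simp
              | add t1 t2 h1 h2 =>
                  simp only [map_add, add_tmul, h1, h2, Finset.sum_add_distrib]
              | tmul v w =>
                  simp only [TensorProduct.assoc_tmul, TensorProduct.map_tmul,
                    LinearMap.id_coe, id_eq]
                  rw [comulAt_top_ap p w c (ℛ k c), TensorProduct.tmul_sum]
            exact key (lcoBase k A ρNl p u)
          · rw [comulAt_ne_ap p j hj u c, lcoBase_succ_map, IH j u, lcoBase_succ_map]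
            have key : ∀ t : A ⊗[k] (Cd k A N p),
                (TensorProduct.assoc k A (Cd k A N (p+1)) A)
                  (((TensorProduct.map LinearMap.id (comulAt k A p j)) t) ⊗ₜ c)
                = (TensorProduct.map LinearMap.id (comulAt k A (p+1) j))
                    ((TensorProduct.assoc k A (Cd k A N p) A) (t ⊗ₜ c)) := by
              intro t
              induction t using TensorProduct.induction_on with
              | zero => simp
              | add t1 t2 h1 h2 => simp only [map_add, add_tmul, h1, h2]
              | tmul v w =>
                  simp only [TensorProduct.assoc_tmul, TensorProduct.map_tmul,
                    LinearMap.id_coe, id_eq]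
                  rw [comulAt_ne_ap p j hj w c]
            exact key (lcoBase k A ρNl p u)

lemma comulAt_leftColinear {ρMl : M →ₗ[k] A ⊗[k] M} {ρNl : N →ₗ[k] A ⊗[k] N}
    {n p : ℕ} {f : Yc k A M N n p} (j : ℕ)
    (hf : IsLeftColinear k A ρMl ρNl n p f) :
    IsLeftColinear k A ρMl ρNl n (p+1) ((comulAt k A p j).comp f) := by
  rw [isLeftColinear_iff]
  intro x m
  show lcoBase k A ρNl (p+1) (comulAt k A p j (f (x ⊗ₜ m))) = _
  rw [lcoBase_comulAt ρNl p j (f (x ⊗ₜ m)), isLeftColinear_iff.mp hf x m]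
  have key : ∀ t : A ⊗[k] (Dm k A M n),
      (TensorProduct.map LinearMap.id (comulAt k A p j))
        ((TensorProduct.map LinearMap.id f) t)
      = (TensorProduct.map LinearMap.id ((comulAt k A p j).comp f)) t := by
    intro t
    induction t using TensorProduct.induction_on with
    | zero => simp
    | add t1 t2 h1 h2 => simp only [map_add, h1, h2]
    | tmul v w =>
        simp only [TensorProduct.map_tmul, LinearMap.comp_apply, LinearMap.id_coe, id_eq]
  exact key (lcoDm k A ρMl n (x ⊗ₜ m))

end DcPart1


section DcPart2
variable {k : Type} [Field k] {A : Type} [Ring A] [Bialgebra k A]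
variable {M N : Type} [AddCommGroup M] [Module k M] [AddCommGroup N] [Module k N]

lemma cofLast_map (ρM : M →ₗ[k] M ⊗[k] A) (n p : ℕ) (f : Yc k A M N n p)
    (x : (Pk k A n : Type)) (m : M) :
    cofLast k A ρM n p f (x ⊗ₜ m) =
      (TensorProduct.map f (μA k A))
        ((TensorProduct.tensorTensorTensorComm k (Pk k A n : Type) A M A)
          ((dR k A n x) ⊗ₜ (ρM m))) := rfl

lemma cofLast_rightLinear {ωMr : M ⊗[k] A →ₗ[k] M} {ωNr : N ⊗[k] A →ₗ[k] N}
    {ρM : M →ₗ[k] M ⊗[k] A} (hRRM : IsHopfRR k A ωMr ρM) {n p : ℕ} {f : Yc k A M N n p}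
    (hf : IsRightLinear k A ωMr ωNr n p f) :
    IsRightLinear k A ωMr ωNr n (p+1) (cofLast k A ρM n p f) := by
  rw [isRightLinear_iff]
  intro x m b
  rw [cofLast_map ρM n p f x (ωMr (m ⊗ₜ b)), hopfRR_map hRRM m b,
    rdiag_succ_map ωNr p (cofLast k A ρM n p f (x ⊗ₜ m)) b,
    cofLast_map ρM n p f x m, TensorProduct.tmul_sum, map_sum, map_sum]
  have key : ∀ (t : (Pk k A n : Type) ⊗[k] A) (s : M ⊗[k] A),
      ∑ j ∈ (ℛ k b).index,
        (TensorProduct.map f (μA k A))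
          ((TensorProduct.tensorTensorTensorComm k (Pk k A n : Type) A M A)
            (t ⊗ₜ ((TensorProduct.map (ωMr ∘ₗ tR ((ℛ k b).left j))
              (mR ((ℛ k b).right j))) s)))
      = ∑ j ∈ (ℛ k b).index,
          (TensorProduct.map (rdiagAct k A ωNr p ∘ₗ tR ((ℛ k b).left j))
            (mR ((ℛ k b).right j)))
            ((TensorProduct.map f (μA k A))
              ((TensorProduct.tensorTensorTensorComm k (Pk k A n : Type) A M A)
                (t ⊗ₜ s))) := by
    intro t s
    induction t using TensorProduct.induction_on with
    | zero => simp
    | add t1 t2 h1 h2 => simp only [map_add, add_tmul, h1, h2, Finset.sum_add_distrib]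
    | tmul y z =>
        induction s using TensorProduct.induction_on with
        | zero => simp
        | add s1 s2 g1 g2 => simp only [map_add, tmul_add, g1, g2, Finset.sum_add_distrib]
        | tmul g h =>
            apply Finset.sum_congr rfl; intro j _
            simp only [TensorProduct.map_tmul, tensorTensorTensorComm_tmul,
              LinearMap.comp_apply, LinearMap.id_coe, id_eq, mR_ap, tR_ap,
              LinearEquiv.coe_coe, LinearMap.mul'_apply, μA]
            rw [rightLinear_ap hf]
            simp only [mul_assoc]
  exact key (dR k A n x) (ρM m)

/-- `dL` and `dR` commute. -/
lemma dLdR : ∀ (n : ℕ) (x : (Pk k A n : Type)),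
    (TensorProduct.map LinearMap.id (dR k A n)) (dL k A n x)
      = (TensorProduct.assoc k A (Pk k A n : Type) A)
          ((TensorProduct.map (dL k A n) LinearMap.id) (dR k A n x)) := by
  intro n
  induction n with
  | zero =>
      intro t
      rw [dL_zero_ap, dR_zero_ap]
      simp [dL_zero_ap, dR_zero_ap]
      rw [dL_zero_ap, dR_zero_ap, TensorProduct.assoc_tmul]
  | succ n IH =>
      intro x'
      induction x' using TensorProduct.induction_on with
      | zero => simp
      | add t1 t2 h1 h2 => simp only [map_add, h1, h2]
      | tmul y c =>
          rw [dL_succ_map n y c, dR_succ_map n y c, map_sum, map_sum, map_sum]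
          have step1 : ∀ (l r : A) (t : A ⊗[k] (Pk k A n : Type)),
              (TensorProduct.map LinearMap.id (dR k A (n+1)))
                ((TensorProduct.map (mR l) (tR r)) t)
              = ∑ j ∈ (ℛ k r).index,
                  (TensorProduct.map (mR l)
                    (TensorProduct.map (tR ((ℛ k r).left j)) (mR ((ℛ k r).right j))))
                    ((TensorProduct.map LinearMap.id (dR k A n)) t) := by
            intro l r t
            induction t using TensorProduct.induction_on with
            | zero => simp
            | add t1 t2 h1 h2 => simp only [map_add, h1, h2, Finset.sum_add_distrib]
            | tmul e w =>
                simp only [TensorProduct.map_tmul, mR_ap, tR_ap, LinearMap.id_coe, id_eq]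
                rw [dR_succ_map n w r, TensorProduct.tmul_sum]
          have step2 : ∀ (l r : A) (s : (Pk k A n : Type) ⊗[k] A),
              (TensorProduct.map (dL k A (n+1)) LinearMap.id)
                ((TensorProduct.map (tR l) (mR r)) s)
              = ∑ j2 ∈ (ℛ k l).index,
                  (TensorProduct.map
                    (TensorProduct.map (mR ((ℛ k l).left j2)) (tR ((ℛ k l).right j2)))
                    (mR r))
                    ((TensorProduct.map (dL k A n) LinearMap.id) s) := by
            intro l r s
            induction s using TensorProduct.induction_on with
            | zero => simp
            | add s1 s2 h1 h2 => simp only [map_add, h1, h2, Finset.sum_add_distrib]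
            | tmul v z =>
                simp only [TensorProduct.map_tmul, mR_ap, tR_ap, LinearMap.id_coe, id_eq]
                rw [dL_succ_map n v l, TensorProduct.sum_tmul]
          simp only [step1, step2, map_sum, IH y]
          have key : ∀ S : (A ⊗[k] (Pk k A n : Type)) ⊗[k] A,
              ∑ i ∈ (ℛ k c).index, ∑ j ∈ (ℛ k ((ℛ k c).right i)).index,
                (TensorProduct.map (mR ((ℛ k c).left i))
                  (TensorProduct.map (tR ((ℛ k ((ℛ k c).right i)).left j))
                    (mR ((ℛ k ((ℛ k c).right i)).right j))))
                  ((TensorProduct.assoc k A (Pk k A n : Type) A) S)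
              = ∑ j ∈ (ℛ k c).index, ∑ j2 ∈ (ℛ k ((ℛ k c).left j)).index,
                  (TensorProduct.assoc k A (Pk k A (n+1) : Type) A)
                    ((TensorProduct.map
                      (TensorProduct.map (mR ((ℛ k ((ℛ k c).left j)).left j2))
                        (tR ((ℛ k ((ℛ k c).left j)).right j2)))
                      (mR ((ℛ k c).right j))) S) := by
            intro S
            induction S using TensorProduct.induction_on with
            | zero => simp
            | add S1 S2 h1 h2 => simp only [map_add, h1, h2, Finset.sum_add_distrib]
            | tmul w z =>
                induction w using TensorProduct.induction_on with
                | zero => simp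
                | add w1 w2 g1 g2 =>
                    simp only [map_add, add_tmul, g1, g2, Finset.sum_add_distrib]
                | tmul e v =>
                    have hc := coassoc_sum
                      (T := A ⊗[k] (((Pk k A n : Type) ⊗[k] A) ⊗[k] A))
                      (TensorProduct.map (mL e) (TensorProduct.map
                        (tL v : A →ₗ[k] ((Pk k A n : Type) ⊗[k] A)) (mL z)))
                      (ℛ k c) (fun j => ℛ k ((ℛ k c).left j))
                      (fun i => ℛ k ((ℛ k c).right i))
                    simp only [TensorProduct.map_tmul, mL_ap, tL_ap] at hc
                    simp only [TensorProduct.assoc_tmul, TensorProduct.map_tmul,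
                      mR_ap, tR_ap, LinearMap.id_coe, id_eq]
                    exact hc.symm
          exact key ((TensorProduct.map (dL k A n) LinearMap.id) (dR k A n y))

/-- The first assembling map for the colinearity of `cofLast`. -/
def lam1 {n p : ℕ} (f : Yc k A M N n p) :
    ((A ⊗[k] (Pk k A n : Type)) ⊗[k] A) ⊗[k] ((A ⊗[k] M) ⊗[k] A) →ₗ[k]
      A ⊗[k] (Cd k A N p ⊗[k] A) :=
  (TensorProduct.assoc k A (Cd k A N p) A).toLinearMap ∘ₗ
    (TensorProduct.map
      ((TensorProduct.map (μA k A) f) ∘ₗ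
        (TensorProduct.tensorTensorTensorComm k A (Pk k A n : Type) A M).toLinearMap)
      (μA k A)) ∘ₗ
    (TensorProduct.tensorTensorTensorComm k (A ⊗[k] (Pk k A n : Type)) A
      (A ⊗[k] M) A).toLinearMap

@[simp] lemma lam1_ap {n p : ℕ} (f : Yc k A M N n p) (e : A) (y' : (Pk k A n : Type))
    (z : A) (g' : A) (h' : M) (h : A) :
    lam1 f (((e ⊗ₜ y') ⊗ₜ z) ⊗ₜ ((g' ⊗ₜ h') ⊗ₜ h)) =
      (e * g') ⊗ₜ (f (y' ⊗ₜ h') ⊗ₜ (z * h)) := by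
  simp [lam1, tensorTensorTensorComm_tmul, LinearMap.mul'_apply, μA]

/-- The second assembling map for the colinearity of `cofLast`. -/
def lam2 {n p : ℕ} (f : Yc k A M N n p) :
    (A ⊗[k] ((Pk k A n : Type) ⊗[k] A)) ⊗[k] (A ⊗[k] (M ⊗[k] A)) →ₗ[k]
      A ⊗[k] (Cd k A N p ⊗[k] A) :=
  (TensorProduct.map (μA k A)
      ((TensorProduct.map f (μA k A)) ∘ₗ
        (TensorProduct.tensorTensorTensorComm k (Pk k A n : Type) A M A).toLinearMap)) ∘ₗ
    (TensorProduct.tensorTensorTensorComm k A ((Pk k A n : Type) ⊗[k] A) A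
      (M ⊗[k] A)).toLinearMap

@[simp] lemma lam2_ap {n p : ℕ} (f : Yc k A M N n p) (e : A) (y' : (Pk k A n : Type))
    (z : A) (g' : A) (h' : M) (h : A) :
    lam2 f ((e ⊗ₜ (y' ⊗ₜ z)) ⊗ₜ (g' ⊗ₜ (h' ⊗ₜ h))) =
      (e * g') ⊗ₜ (f (y' ⊗ₜ h') ⊗ₜ (z * h)) := by
  simp [lam2, tensorTensorTensorComm_tmul, LinearMap.mul'_apply, μA]

lemma cofLast_leftColinear {ρMl : M →ₗ[k] A ⊗[k] M} {ρNl : N →ₗ[k] A ⊗[k] N}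
    {ρM : M →ₗ[k] M ⊗[k] A} (hBCM : IsBicomodule k A ρMl ρM) {n p : ℕ}
    {f : Yc k A M N n p} (hf : IsLeftColinear k A ρMl ρNl n p f) :
    IsLeftColinear k A ρMl ρNl n (p+1) (cofLast k A ρM n p f) := by
  rw [isLeftColinear_iff]
  intro x m
  have E1 := dLdR n x
  have E2 := LinearMap.congr_fun hBCM m
  simp only [LinearMap.comp_apply, LinearEquiv.coe_coe] at E2
  have claimA : lcoBase k A ρNl (p+1) (cofLast k A ρM n p f (x ⊗ₜ m)) =
      lam1 f (((TensorProduct.map (dL k A n) LinearMap.id) (dR k A n x)) ⊗ₜ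
        ((TensorProduct.map ρMl LinearMap.id) (ρM m))) := by
    rw [cofLast_map]
    have key : ∀ (t : (Pk k A n : Type) ⊗[k] A) (s : M ⊗[k] A),
        lcoBase k A ρNl (p+1)
          ((TensorProduct.map f (μA k A))
            ((TensorProduct.tensorTensorTensorComm k (Pk k A n : Type) A M A) (t ⊗ₜ s)))
        = lam1 f (((TensorProduct.map (dL k A n) LinearMap.id) t) ⊗ₜ
            ((TensorProduct.map ρMl LinearMap.id) s)) := by
      intro t s
      induction t using TensorProduct.induction_on with
      | zero => simp
      | add t1 t2 h1 h2 => simp only [map_add, add_tmul, h1, h2]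
      | tmul y z =>
          induction s using TensorProduct.induction_on with
          | zero => simp
          | add s1 s2 g1 g2 => simp only [map_add, tmul_add, g1, g2]
          | tmul g h =>
              simp only [TensorProduct.map_tmul, tensorTensorTensorComm_tmul,
                LinearMap.id_coe, id_eq]
              rw [lcoBase_succ_map, isLeftColinear_iff.mp hf y g, lcoDm_map]
              have key2 : ∀ (t2 : A ⊗[k] (Pk k A n : Type)) (s2 : A ⊗[k] M),
                  (TensorProduct.assoc k A (Cd k A N p) A)
                    (((TensorProduct.map LinearMap.id f)
                      ((TensorProduct.map (μA k A) LinearMap.id)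
                        ((TensorProduct.tensorTensorTensorComm k A (Pk k A n : Type) A M)
                          (t2 ⊗ₜ s2)))) ⊗ₜ (z * h))
                  = lam1 f ((t2 ⊗ₜ z) ⊗ₜ (s2 ⊗ₜ h)) := by
                intro t2 s2
                induction t2 using TensorProduct.induction_on with
                | zero => simp
                | add a1 a2 q1 q2 => simp only [map_add, add_tmul, q1, q2]
                | tmul e y' =>
                    induction s2 using TensorProduct.induction_on with
                    | zero => simp
                    | add b1 b2 q1 q2 => simp only [map_add, add_tmul, tmul_add, q1, q2]
                    | tmul g' h' =>
                        simp only [TensorProduct.map_tmul, tensorTensorTensorComm_tmul,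
                          LinearMap.id_coe, id_eq, LinearMap.mul'_apply, μA,
                          TensorProduct.assoc_tmul, lam1_ap]
                        try rw [mul_assoc]
              exact key2 (dL k A n y) (ρMl g)
    exact key (dR k A n x) (ρM m)
  have claimB : (TensorProduct.map LinearMap.id (cofLast k A ρM n p f))
      (lcoDm k A ρMl n (x ⊗ₜ m)) =
      lam2 f (((TensorProduct.map LinearMap.id (dR k A n)) (dL k A n x)) ⊗ₜ
        ((TensorProduct.map LinearMap.id ρM) (ρMl m))) := by
    rw [lcoDm_map]
    have key : ∀ (t : A ⊗[k] (Pk k A n : Type)) (s : A ⊗[k] M),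
        (TensorProduct.map LinearMap.id (cofLast k A ρM n p f))
          ((TensorProduct.map (μA k A) LinearMap.id)
            ((TensorProduct.tensorTensorTensorComm k A (Pk k A n : Type) A M) (t ⊗ₜ s)))
        = lam2 f (((TensorProduct.map LinearMap.id (dR k A n)) t) ⊗ₜ
            ((TensorProduct.map LinearMap.id ρM) s)) := by
      intro t s
      induction t using TensorProduct.induction_on with
      | zero => simp
      | add t1 t2 h1 h2 => simp only [map_add, add_tmul, h1, h2]
      | tmul e w =>
          induction s using TensorProduct.induction_on with
          | zero => simp
          | add s1 s2 g1 g2 => simp only [map_add, tmul_add, g1, g2]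
          | tmul g' h2 =>
              simp only [TensorProduct.map_tmul, tensorTensorTensorComm_tmul,
                LinearMap.id_coe, id_eq, LinearMap.mul'_apply, μA]
              rw [cofLast_map]
              have key2 : ∀ (t2 : (Pk k A n : Type) ⊗[k] A) (s2 : M ⊗[k] A),
                  (e * g') ⊗ₜ[k] ((TensorProduct.map f (μA k A))
                    ((TensorProduct.tensorTensorTensorComm k (Pk k A n : Type) A M A)
                      (t2 ⊗ₜ s2)))
                  = lam2 f ((e ⊗ₜ t2) ⊗ₜ (g' ⊗ₜ s2)) := by
                intro t2 s2
                induction t2 using TensorProduct.induction_on with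
                | zero => simp
                | add a1 a2 q1 q2 =>
                    simp only [map_add, add_tmul, tmul_add, q1, q2]
                | tmul y' z =>
                    induction s2 using TensorProduct.induction_on with
                    | zero => simp
                    | add b1 b2 q1 q2 =>
                        simp only [map_add, add_tmul, tmul_add, q1, q2]
                    | tmul h' h =>
                        simp only [TensorProduct.map_tmul, tensorTensorTensorComm_tmul,
                          LinearMap.mul'_apply, μA, lam2_ap]
              exact key2 (dR k A n w) (ρM h2)
    exact key (dL k A n x) (ρMl m)
  have claimC : ∀ (P : (A ⊗[k] (Pk k A n : Type)) ⊗[k] A) (Q : (A ⊗[k] M) ⊗[k] A),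
      lam2 f (((TensorProduct.assoc k A (Pk k A n : Type) A) P) ⊗ₜ
        ((TensorProduct.assoc k A M A) Q)) = lam1 f (P ⊗ₜ Q) := by
    intro P Q
    induction P using TensorProduct.induction_on with
    | zero => simp
    | add P1 P2 h1 h2 => simp only [map_add, add_tmul, h1, h2]
    | tmul w z =>
        induction w using TensorProduct.induction_on with
        | zero => simp
        | add w1 w2 g1 g2 => simp only [map_add, add_tmul, g1, g2]
        | tmul e y' =>
            induction Q using TensorProduct.induction_on with
            | zero => simp
            | add Q1 Q2 g1 g2 => simp only [map_add, tmul_add, g1, g2]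
            | tmul w2 h =>
                induction w2 using TensorProduct.induction_on with
                | zero => simp
                | add v1 v2 g1 g2 => simp only [map_add, add_tmul, tmul_add, g1, g2]
                | tmul g' h' =>
                    simp only [TensorProduct.assoc_tmul, lam1_ap, lam2_ap]
  rw [claimA, claimB, E1, E2, claimC]

lemma dcH_rightLinear {ωMr : M ⊗[k] A →ₗ[k] M} {ωNr : N ⊗[k] A →ₗ[k] N}
    {ρM : M →ₗ[k] M ⊗[k] A} {ρN : N →ₗ[k] N ⊗[k] A} {n p : ℕ} {f : Yc k A M N n p}
    (hRRM : IsHopfRR k A ωMr ρM) (hRRN : IsHopfRR k A ωNr ρN)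
    (hf : IsRightLinear k A ωMr ωNr n p f) :
    IsRightLinear k A ωMr ωNr n (p+1) (dcH k A ρM ρN n p f) := by
  unfold dcH
  apply isRightLinear_sum
  intro j _
  unfold cH
  split_ifs with h1 h2
  · exact cof0H_rightLinear hRRN hf
  · exact comulAt_rightLinear j hf
  · exact cofLast_rightLinear hRRM hf

lemma dcH_leftColinear {ρMl : M →ₗ[k] A ⊗[k] M} {ρNl : N →ₗ[k] A ⊗[k] N}
    {ρM : M →ₗ[k] M ⊗[k] A} {ρN : N →ₗ[k] N ⊗[k] A} {n p : ℕ} {f : Yc k A M N n p}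
    (hBCM : IsBicomodule k A ρMl ρM) (hBCN : IsBicomodule k A ρNl ρN)
    (hf : IsLeftColinear k A ρMl ρNl n p f) :
    IsLeftColinear k A ρMl ρNl n (p+1) (dcH k A ρM ρN n p f) := by
  unfold dcH
  apply isLeftColinear_sum
  intro j _
  unfold cH
  split_ifs with h1 h2
  · exact cof0H_leftColinear hBCN hf
  · exact comulAt_leftColinear j hf
  · exact cofLast_leftColinear hBCM hf

end DcPart2

end Proofs



/-- For Hopf bimodules `M, N` over `A`, the subspaces
`T^{n,p}(M,N) = Hom_{mod-A}^{A-comod}(A^{⊗n} ⊗ M, N ⊗ A^{⊗p})` of maps that are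
simultaneously right `A`-linear and left `A`-colinear are stable under the
Hopf-module differentials `d_m, d_c`, so `(T^{n,p}(M,N), d_m, d_c)` is a double
complex, defining a cohomology theory for Hopf bimodules. -/
theorem hopf_bimodule_subcomplex (k : Type) [Field k] (A : Type) [Ring A]
    [Bialgebra k A]
    (M N : Type) [AddCommGroup M] [Module k M] [AddCommGroup N] [Module k N]
    (ωM : A ⊗[k] M →ₗ[k] M) (ωMr : M ⊗[k] A →ₗ[k] M)
    (ρMl : M →ₗ[k] A ⊗[k] M) (ρM : M →ₗ[k] M ⊗[k] A)
    (ωN : A ⊗[k] N →ₗ[k] N) (ωNr : N ⊗[k] A →ₗ[k] N)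
    (ρNl : N →ₗ[k] A ⊗[k] N) (ρN : N →ₗ[k] N ⊗[k] A)
    (hM : IsHopfBimodule k A ωM ωMr ρMl ρM) (hN : IsHopfBimodule k A ωN ωNr ρNl ρN)
    (n p : ℕ) (f : Yc k A M N n p)
    (hf : IsRightLinear k A ωMr ωNr n p f ∧ IsLeftColinear k A ρMl ρNl n p f) :
    (IsRightLinear k A ωMr ωNr (n+1) p (dmH k A ωM ωN n p f) ∧
      IsLeftColinear k A ρMl ρNl (n+1) p (dmH k A ωM ωN n p f)) ∧
    (IsRightLinear k A ωMr ωNr n (p+1) (dcH k A ρM ρN n p f) ∧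
      IsLeftColinear k A ρMl ρNl n (p+1) (dcH k A ρM ρN n p f)) := by
  obtain ⟨hf1, hf2⟩ := hf
  obtain ⟨_, _, hMbim, _, _, hMbc, hMLL, _, _, hMRR⟩ := hM
  obtain ⟨_, _, hNbim, _, _, hNbc, hNLL, _, _, hNRR⟩ := hN
  exact ⟨⟨dmH_rightLinear hMbim hNbim hf1, dmH_leftColinear hMLL hNLL hf2⟩,
    ⟨dcH_rightLinear hMRR hNRR hf1, dcH_leftColinear hMbc hNbc hf2⟩⟩

end PS
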